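/- arXiv:2302.05072 — 4 statements merged into one kernel-verified Lean document; each statement's English description precedes it below -/
import Mathlib

section
/- In the topological amalgamated limit setting, if F ⊆ I is closed and y ∈ Y_F, then there exists x ∈ X_ℓ with x(j) = y(j) for all j ∈ F. In particular, for every i ∈ I and every x_i ∈ X_i there is x ∈ X_ℓ with x(i) = x_i; hence each projection p^ℓ_i : X_ℓ → X_i is surjective and X_ℓ is nonempty. -/
/-- A distributive almost-lattice: a partial order where any two elements have a meet,
any two elements with a common upper bound have a join, among any three elements two have
a common upper bound, the distributive laws hold whenever both sides exist, and
conditions (v) and (vi) hold. -/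
structure DistribAlmostLattice (I : Type*) [PartialOrder I] where
  meet : I → I → I
  join : I → I → I
  /-- (i): `meet i j` is the greatest lower bound of `i` and `j` -/
  meet_isGLB : ∀ i j : I, IsGLB {i, j} (meet i j)
  /-- (ii): if `i`, `j` have a common upper bound, `join i j` is their least upper bound -/
  join_isLUB : ∀ i j : I, (∃ u, i ≤ u ∧ j ≤ u) → IsLUB {i, j} (join i j)
  /-- (iii): among any three elements, two have a common upper bound -/
  two_of_three : ∀ i j k : I,
    (∃ u, i ≤ u ∧ j ≤ u) ∨ (∃ u, i ≤ u ∧ k ≤ u) ∨ (∃ u, j ≤ u ∧ k ≤ u)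
  /-- (iv): distributivity of meet over join (whenever both sides exist) -/
  distrib_meet_join : ∀ i j k : I, (∃ u, j ≤ u ∧ k ≤ u) →
    meet i (join j k) = join (meet i j) (meet i k)
  /-- (iv): distributivity of join over meet (whenever both sides exist) -/
  distrib_join_meet : ∀ i j k : I, (∃ u, i ≤ u ∧ j ≤ u) → (∃ u, i ≤ u ∧ k ≤ u) →
    join i (meet j k) = meet (join i j) (join i k)
  /-- (v) -/
  cond_v : ∀ i j j' : I, ¬(∃ u, i ≤ u ∧ j ≤ u) →
    ((¬(∃ u, i ≤ u ∧ j' ≤ u) ∧ ¬(∃ u, i ≤ u ∧ meet j j' ≤ u)) ∨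
      join i j' = join i (meet j j'))
  /-- (vi) -/
  cond_vi : ∀ i j j' : I, ¬(∃ u, j ≤ u ∧ j' ≤ u) →
    join (meet i j) (meet i j') = i

namespace DistribAlmostLattice

variable {I : Type*} [PartialOrder I] (L : DistribAlmostLattice I)

theorem meet_le_left (i j : I) : L.meet i j ≤ i :=
  (L.meet_isGLB i j).1 (Set.mem_insert _ _)

theorem meet_le_right (i j : I) : L.meet i j ≤ j :=
  (L.meet_isGLB i j).1 (Set.mem_insert_of_mem _ rfl)

theorem le_join_left (i j : I) (h : ∃ u, i ≤ u ∧ j ≤ u) : i ≤ L.join i j :=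
  (L.join_isLUB i j h).1 (Set.mem_insert _ _)

theorem le_join_right (i j : I) (h : ∃ u, i ≤ u ∧ j ≤ u) : j ≤ L.join i j :=
  (L.join_isLUB i j h).1 (Set.mem_insert_of_mem _ rfl)

end DistribAlmostLattice

/-- A subset `F` of a distributive almost-lattice is closed if it is closed under meets
and under joins whenever they exist. -/
def IsClosedSubset {I : Type*} [PartialOrder I] (L : DistribAlmostLattice I)
    (F : Set I) : Prop :=
  ∀ i ∈ F, ∀ j ∈ F, L.meet i j ∈ F ∧ ((∃ u, i ≤ u ∧ j ≤ u) → L.join i j ∈ F)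

section TopAmal

variable {I : Type*} [PartialOrder I]
variable (X : I → Type*) (p : ∀ i j : I, i ≤ j → X j → X i)

/-- Membership in the topological amalgamated limit `X_ℓ ⊆ Π_{i∈I} X_i`. -/
def InXl (x : ∀ i, X i) : Prop :=
  ∀ i j : I, ∀ hij : i ≤ j, p i j hij (x j) = x i

/-- Membership in `Y_F`: threads indexed by a subset `F ⊆ I`. -/
def InY (F : Set I) (y : ∀ i, X i) : Prop :=
  ∀ k ∈ F, ∀ j ∈ F, ∀ h : k ≤ j, p k j h (y j) = y k

end TopAmal

section AuxLattice

variable {I : Type*} [PartialOrder I]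

theorem DAL.le_meet (L : DistribAlmostLattice I) {k i j : I} (h1 : k ≤ i) (h2 : k ≤ j) :
    k ≤ L.meet i j :=
  (L.meet_isGLB i j).2 (by
    rintro x hx
    rcases Set.mem_insert_iff.mp hx with rfl | hx
    · exact h1
    · rw [Set.mem_singleton_iff.mp hx]; exact h2)

theorem DAL.join_le (L : DistribAlmostLattice I) {i j u' : I} (hub : ∃ u, i ≤ u ∧ j ≤ u)
    (h1 : i ≤ u') (h2 : j ≤ u') : L.join i j ≤ u' :=
  (L.join_isLUB i j hub).2 (by
    rintro x hx
    rcases Set.mem_insert_iff.mp hx with rfl | hx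
    · exact h1
    · rw [Set.mem_singleton_iff.mp hx]; exact h2)

theorem DAL.meet_comm (L : DistribAlmostLattice I) (a b : I) : L.meet a b = L.meet b a :=
  IsGLB.unique (L.meet_isGLB a b) (Set.pair_comm a b ▸ L.meet_isGLB b a)

theorem DAL.glb_union (L : DistribAlmostLattice I) {A B : Set I} {x x' : I}
    (h : IsGLB A x) (h' : IsGLB B x') : IsGLB (A ∪ B) (L.meet x x') := by
  constructor
  · rintro z (hz | hz)
    · exact (L.meet_le_left x x').trans (h.1 hz)
    · exact (L.meet_le_right x x').trans (h'.1 hz)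
  · intro z hz
    exact DAL.le_meet L (h.2 fun w hw => hz (Set.mem_union_left _ hw))
      (h'.2 fun w hw => hz (Set.mem_union_right _ hw))

theorem DAL.lub_union (L : DistribAlmostLattice I) {A B : Set I} {x x' : I}
    (hub : ∃ u, x ≤ u ∧ x' ≤ u)
    (h : IsLUB A x) (h' : IsLUB B x') : IsLUB (A ∪ B) (L.join x x') := by
  constructor
  · rintro z (hz | hz)
    · exact (h.1 hz).trans (L.le_join_left x x' hub)
    · exact (h'.1 hz).trans (L.le_join_right x x' hub)
  · intro z hz
    exact DAL.join_le L hub (h.2 fun w hw => hz (Set.mem_union_left _ hw))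
      (h'.2 fun w hw => hz (Set.mem_union_right _ hw))

theorem DAL.lub_insert (L : DistribAlmostLattice I) {A : Set I} {ju a : I} (h : IsLUB A ju)
    (hub : ∃ v, a ≤ v ∧ ju ≤ v) : IsLUB (insert a A) (L.join a ju) := by
  constructor
  · rintro z hz
    rcases Set.mem_insert_iff.mp hz with rfl | hz
    · exact L.le_join_left _ _ hub
    · exact (h.1 hz).trans (L.le_join_right _ _ hub)
  · intro z hz
    exact DAL.join_le L hub (hz (Set.mem_insert _ _))
      (h.2 fun w hw => hz (Set.mem_insert_of_mem _ hw))

theorem DAL.lub_exists (L : DistribAlmostLattice I) :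
    ∀ (s : Finset I), s.Nonempty → (∃ b, ∀ z ∈ s, z ≤ b) →
    ∃ j, IsLUB (↑s : Set I) j := by
  classical
  intro s
  induction s using Finset.induction_on with
  | empty => intro hne _; exact absurd hne (by simp)
  | @insert a u hau IH =>
    intro _ hbd
    rcases u.eq_empty_or_nonempty with rfl | hune
    · exact ⟨a, by simpa using isLUB_singleton⟩
    · obtain ⟨b, hb⟩ := hbd
      obtain ⟨ju, hju⟩ := IH hune ⟨b, fun z hz => hb z (Finset.mem_insert_of_mem hz)⟩
      have hub : ∃ v, a ≤ v ∧ ju ≤ v :=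
        ⟨b, hb a (Finset.mem_insert_self a u),
          hju.2 fun z hz => hb z (Finset.mem_insert_of_mem (Finset.mem_coe.mp hz))⟩
      exact ⟨L.join a ju, by rw [Finset.coe_insert]; exact DAL.lub_insert L hju hub⟩

theorem DAL.lub_image_meet (L : DistribAlmostLattice I) [DecidableEq I] :
    ∀ (s : Finset I), s.Nonempty → ∀ (c x : I), IsLUB (↑s : Set I) x →
    IsLUB (↑(s.image (L.meet c)) : Set I) (L.meet c x) := by
  intro s
  induction s using Finset.induction_on with
  | empty => intro hne; exact absurd hne (by simp)
  | @insert a u hau IH =>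
    intro _ c x hx
    rcases u.eq_empty_or_nonempty with rfl | hune
    · have hxa : x = a := IsLUB.unique hx (by simpa using isLUB_singleton)
      subst hxa
      simpa using isLUB_singleton
    · have hax : a ≤ x := hx.1 (by simp)
      have hux : ∀ z ∈ u, z ≤ x := fun z hz =>
        hx.1 (Finset.mem_coe.mpr (Finset.mem_insert_of_mem hz))
      obtain ⟨ju, hju⟩ := DAL.lub_exists L u hune ⟨x, hux⟩
      have hjux : ju ≤ x := hju.2 fun z hz => hux z (Finset.mem_coe.mp hz)
      have hub : ∃ v, a ≤ v ∧ ju ≤ v := ⟨x, hax, hjux⟩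
      have hxval : x = L.join a ju :=
        IsLUB.unique hx (by rw [Finset.coe_insert]; exact DAL.lub_insert L hju hub)
      have hdist : L.meet c x = L.join (L.meet c a) (L.meet c ju) := by
        rw [hxval]; exact L.distrib_meet_join c a ju hub
      rw [Finset.image_insert, Finset.coe_insert, hdist]
      refine DAL.lub_insert L (IH hune c ju hju) ?_
      exact ⟨L.meet c x, DAL.le_meet L (L.meet_le_left c a) ((L.meet_le_right c a).trans hax),
        DAL.le_meet L (L.meet_le_left c ju) ((L.meet_le_right c ju).trans hjux)⟩

theorem DAL.lub_image2 (L : DistribAlmostLattice I) [DecidableEq I] (s s' : Finset I)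
    (hne : s.Nonempty) (hne' : s'.Nonempty) {a b : I}
    (hs : IsLUB (↑s : Set I) a) (hs' : IsLUB (↑s' : Set I) b) :
    IsLUB (Set.image2 L.meet ↑s ↑s') (L.meet a b) := by
  constructor
  · rintro z ⟨e, he, e', he', rfl⟩
    exact DAL.le_meet L ((L.meet_le_left e e').trans (hs.1 he))
      ((L.meet_le_right e e').trans (hs'.1 he'))
  · intro z hz
    have h1 : ∀ e' ∈ s', L.meet a e' ≤ z := by
      intro e' he'
      have hlub : IsLUB (↑(s.image (L.meet e')) : Set I) (L.meet e' a) :=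
        DAL.lub_image_meet L s hne e' a hs
      have hle : L.meet e' a ≤ z := by
        refine hlub.2 ?_
        rintro v hv
        obtain ⟨e, he, rfl⟩ := Finset.mem_image.mp (Finset.mem_coe.mp hv)
        have hmem : L.meet e e' ∈ Set.image2 L.meet (↑s : Set I) ↑s' :=
          ⟨e, Finset.mem_coe.mpr he, e', Finset.mem_coe.mpr he', rfl⟩
        rw [DAL.meet_comm L e' e]
        exact hz hmem
      rw [DAL.meet_comm L a e']
      exact hle
    have hlub2 : IsLUB (↑(s'.image (L.meet a)) : Set I) (L.meet a b) :=
      DAL.lub_image_meet L s' hne' a b hs'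
    refine hlub2.2 ?_
    rintro v hv
    obtain ⟨e', he', rfl⟩ := Finset.mem_image.mp (Finset.mem_coe.mp hv)
    exact h1 e' he'

end AuxLattice

section Closure

variable {I : Type*} [PartialOrder I]

theorem DAL.closure_exists (L : DistribAlmostLattice I) (T : Finset I) :
    ∃ Cs : Set I, Cs.Finite ∧ ↑T ⊆ Cs ∧ IsClosedSubset L Cs := by
  classical
  set M : Set I := {x | ∃ s : Finset I, s ⊆ T ∧ s.Nonempty ∧ IsGLB (↑s : Set I) x} with hMdef
  have hMfin : M.Finite := by
    have hsub : M ⊆ ⋃ s ∈ T.powerset, {x | IsGLB (↑s : Set I) x} := by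
      rintro x ⟨s, hs1, _, hs3⟩
      exact Set.mem_biUnion (Finset.mem_powerset.mpr hs1) hs3
    refine Set.Finite.subset (Set.Finite.biUnion T.powerset.finite_toSet ?_) hsub
    intro s _
    exact Set.Subsingleton.finite fun x hx y hy => IsGLB.unique hx hy
  have hTM : ∀ t ∈ T, t ∈ M := fun t ht =>
    ⟨{t}, Finset.singleton_subset_iff.mpr ht, Finset.singleton_nonempty t,
      by simpa using isGLB_singleton⟩
  have hMmeet : ∀ x ∈ M, ∀ x' ∈ M, L.meet x x' ∈ M := by
    rintro x ⟨s, hs1, hs2, hs3⟩ x' ⟨s', hs1', hs2', hs3'⟩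
    refine ⟨s ∪ s', Finset.union_subset hs1 hs1', hs2.mono Finset.subset_union_left, ?_⟩
    rw [Finset.coe_union]
    exact DAL.glb_union L hs3 hs3'
  set Cs : Set I := {x | ∃ s : Finset I, ↑s ⊆ M ∧ s.Nonempty ∧ IsLUB (↑s : Set I) x} with hCdef
  have hCfin : Cs.Finite := by
    have hsub : Cs ⊆ ⋃ s ∈ hMfin.toFinset.powerset, {x | IsLUB (↑s : Set I) x} := by
      rintro x ⟨s, hs1, _, hs3⟩
      refine Set.mem_biUnion (Finset.mem_powerset.mpr ?_) hs3
      intro a ha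
      exact hMfin.mem_toFinset.mpr (hs1 ha)
    refine Set.Finite.subset (Set.Finite.biUnion (Finset.finite_toSet _) ?_) hsub
    intro s _
    exact Set.Subsingleton.finite fun x hx y hy => IsLUB.unique hx hy
  refine ⟨Cs, hCfin, ?_, ?_⟩
  · intro t ht
    exact ⟨{t}, by simpa using hTM t ht, Finset.singleton_nonempty t,
      by simpa using isLUB_singleton⟩
  · rintro a ⟨s, hs1, hs2, hs3⟩ b ⟨s', hs1', hs2', hs3'⟩
    constructor
    · -- meets
      refine ⟨Finset.image₂ L.meet s s', ?_, ?_, ?_⟩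
      · intro z hz
        rw [Finset.coe_image₂] at hz
        obtain ⟨e, he, e', he', rfl⟩ := hz
        exact hMmeet e (hs1 he) e' (hs1' he')
      · obtain ⟨e, he⟩ := hs2
        obtain ⟨e', he'⟩ := hs2'
        exact ⟨L.meet e e', Finset.mem_image₂.mpr ⟨e, he, e', he', rfl⟩⟩
      · rw [Finset.coe_image₂]
        exact DAL.lub_image2 L s s' hs2 hs2' hs3 hs3'
    · -- joins
      intro hub
      refine ⟨s ∪ s', ?_, hs2.mono Finset.subset_union_left, ?_⟩
      · rw [Finset.coe_union]
        exact Set.union_subset hs1 hs1'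
      · rw [Finset.coe_union]
        exact DAL.lub_union L hub hs3 hs3'

end Closure

section Merging

variable {I : Type*} [PartialOrder I] (L : DistribAlmostLattice I)
  (X : I → Type*) [∀ i, Nonempty (X i)]
  (p : ∀ i j : I, i ≤ j → X j → X i)

theorem DAL.merging
    (hsurj : ∀ i j : I, ∀ hij : i ≤ j, Function.Surjective (p i j hij))
    (hid : ∀ i : I, ∀ hii : i ≤ i, ∀ x : X i, p i i hii x = x)
    (hcomp : ∀ i j k : I, ∀ hij : i ≤ j, ∀ hjk : j ≤ k, ∀ x : X k,
      p i j hij (p j k hjk x) = p i k (hij.trans hjk) x)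
    (hcor : ∀ i j : I, ∀ hub : ∃ u, i ≤ u ∧ j ≤ u, ∀ xi : X i, ∀ xj : X j,
      p (L.meet i j) i (L.meet_le_left i j) xi =
        p (L.meet i j) j (L.meet_le_right i j) xj →
      ∃ z : X (L.join i j),
        p i (L.join i j) (L.le_join_left i j hub) z = xi ∧
        p j (L.join i j) (L.le_join_right i j hub) z = xj)
    (t₀ : I) (Δ : Finset I) (V : ∀ i, X i)
    (P1 : ∀ d ∈ Δ, ∀ d' ∈ Δ, ∀ k : I, ∀ h1 : k ≤ d, ∀ h2 : k ≤ d',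
        p k d h1 (V d) = p k d' h2 (V d'))
    (P2 : ∀ d ∈ Δ, ∀ d' ∈ Δ, (∃ u, d ≤ u ∧ d' ≤ u) → L.join d d' ∈ Δ)
    (P3 : ∀ d ∈ Δ, ∀ d' ∈ Δ, ∀ h : d ≤ d', p d d' h (V d') = V d) :
    ∀ n (Γ : Finset I), Γ.card ≤ n → Γ ⊆ Δ →
      ∃ x : X t₀, ∀ d ∈ Γ, ∀ k : I, ∀ h1 : k ≤ t₀, ∀ h2 : k ≤ d,
        p k t₀ h1 x = p k d h2 (V d) := by
  classical
  intro n
  induction n with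
  | zero =>
    intro Γ hcard _
    have hΓ : Γ = ∅ := Finset.card_eq_zero.mp (Nat.le_zero.mp hcard)
    subst hΓ
    exact ⟨Classical.arbitrary _, by simp⟩
  | succ n IH =>
    intro Γ hcard hΓΔ
    by_cases hpair : ∃ d ∈ Γ, ∃ d' ∈ Γ, d ≠ d' ∧ ∃ u, d ≤ u ∧ d' ≤ u
    · obtain ⟨d, hd, d', hd', hne, hub⟩ := hpair
      have hdj : d ≤ L.join d d' := L.le_join_left d d' hub
      have hd'j : d' ≤ L.join d d' := L.le_join_right d d' hub
      have hjΔ : L.join d d' ∈ Δ := P2 d (hΓΔ hd) d' (hΓΔ hd') hub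
      have hd'e : d' ∈ Γ.erase d := Finset.mem_erase.mpr ⟨fun h => hne h.symm, hd'⟩
      have hcard' : (insert (L.join d d') ((Γ.erase d).erase d')).card ≤ n := by
        have h1 := Finset.card_insert_le (L.join d d') ((Γ.erase d).erase d')
        rw [Finset.card_erase_of_mem hd'e, Finset.card_erase_of_mem hd] at h1
        have h2 : 2 ≤ Γ.card := Finset.one_lt_card.mpr ⟨d, hd, d', hd', hne⟩
        omega
      have hsub : insert (L.join d d') ((Γ.erase d).erase d') ⊆ Δ := by
        intro e he
        rcases Finset.mem_insert.mp he with rfl | he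
        · exact hjΔ
        · exact hΓΔ (Finset.mem_of_mem_erase (Finset.mem_of_mem_erase he))
      obtain ⟨x, hx⟩ := IH _ hcard' hsub
      refine ⟨x, ?_⟩
      have key : ∀ e, e ∈ Δ → ∀ hej : e ≤ L.join d d', ∀ k, ∀ h1 : k ≤ t₀, ∀ h2 : k ≤ e,
          p k t₀ h1 x = p k e h2 (V e) := by
        intro e heΔ hej k h1 h2
        have hkj : k ≤ L.join d d' := h2.trans hej
        rw [hx (L.join d d') (Finset.mem_insert_self _ _) k h1 hkj]
        have hP3 := P3 e heΔ (L.join d d') hjΔ hej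
        calc p k (L.join d d') hkj (V (L.join d d'))
            = p k e h2 (p e (L.join d d') hej (V (L.join d d'))) :=
              (hcomp k e (L.join d d') h2 hej (V (L.join d d'))).symm
          _ = p k e h2 (V e) := by rw [hP3]
      intro e he k h1 h2
      by_cases hed : e = d
      · subst hed; exact key e (hΓΔ he) hdj k h1 h2
      by_cases hed' : e = d'
      · subst hed'; exact key e (hΓΔ he) hd'j k h1 h2
      · exact hx e (Finset.mem_insert_of_mem
          (Finset.mem_erase.mpr ⟨hed', Finset.mem_erase.mpr ⟨hed, he⟩⟩)) k h1 h2
    · push_neg at hpair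
      -- Γ is pairwise incompatible; by (iii) it has at most two elements.
      have hcard2 : Γ.card ≤ 2 := by
        by_contra hgt
        obtain ⟨d, hd, d', hd', d'', hd'', hne1, hne2, hne3⟩ :=
          (Finset.two_lt_card (s := Γ)).mp (by omega)
        rcases L.two_of_three d d' d'' with ⟨u, hu1, hu2⟩ | ⟨u, hu1, hu2⟩ | ⟨u, hu1, hu2⟩
        · exact hpair d hd d' hd' hne1 u hu1 hu2
        · exact hpair d hd d'' hd'' hne2 u hu1 hu2
        · exact hpair d' hd' d'' hd'' hne3 u hu1 hu2
      interval_cases hΓc : Γ.card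
      · -- card 0
        have hΓ : Γ = ∅ := Finset.card_eq_zero.mp hΓc
        subst hΓ
        exact ⟨Classical.arbitrary _, by simp⟩
      · -- card 1
        obtain ⟨d, hΓ⟩ := Finset.card_eq_one.mp hΓc
        subst hΓ
        have hmd : L.meet t₀ d ≤ d := L.meet_le_right t₀ d
        have hmt : L.meet t₀ d ≤ t₀ := L.meet_le_left t₀ d
        obtain ⟨x, hxeq⟩ := hsurj (L.meet t₀ d) t₀ hmt (p (L.meet t₀ d) d hmd (V d))
        refine ⟨x, ?_⟩
        intro e he k h1 h2
        have he' : e = d := Finset.mem_singleton.mp he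
        subst he'
        have hkm : k ≤ L.meet t₀ e := DAL.le_meet L h1 h2
        calc p k t₀ h1 x
            = p k (L.meet t₀ e) hkm (p (L.meet t₀ e) t₀ hmt x) :=
              (hcomp k (L.meet t₀ e) t₀ hkm hmt x).symm
          _ = p k (L.meet t₀ e) hkm (p (L.meet t₀ e) e hmd (V e)) := by rw [hxeq]
          _ = p k e h2 (V e) := hcomp k (L.meet t₀ e) e hkm hmd (V e)
      · -- card 2
        obtain ⟨d, d', hne, hΓ⟩ := Finset.card_eq_two.mp hΓc
        subst hΓ
        have hd : d ∈ ({d, d'} : Finset I) := Finset.mem_insert_self _ _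
        have hd' : d' ∈ ({d, d'} : Finset I) := Finset.mem_insert_of_mem (Finset.mem_singleton_self _)
        have hnub : ¬∃ u, d ≤ u ∧ d' ≤ u := fun ⟨u, hu1, hu2⟩ => hpair d hd d' hd' hne u hu1 hu2
        have heq : L.join (L.meet t₀ d) (L.meet t₀ d') = t₀ := L.cond_vi t₀ d d' hnub
        have hAt : L.meet t₀ d ≤ t₀ := L.meet_le_left t₀ d
        have hBt : L.meet t₀ d' ≤ t₀ := L.meet_le_left t₀ d'
        have hAd : L.meet t₀ d ≤ d := L.meet_le_right t₀ d
        have hBd : L.meet t₀ d' ≤ d' := L.meet_le_right t₀ d'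
        have hAB : ∃ u, L.meet t₀ d ≤ u ∧ L.meet t₀ d' ≤ u := ⟨t₀, hAt, hBt⟩
        set A := L.meet t₀ d with hA
        set B := L.meet t₀ d' with hB
        -- the two pushed-down values agree on the meet
        have hABd : L.meet A B ≤ d := (L.meet_le_left A B).trans hAd
        have hABd' : L.meet A B ≤ d' := (L.meet_le_right A B).trans hBd
        have hmatch : p (L.meet A B) A (L.meet_le_left A B) (p A d hAd (V d)) =
            p (L.meet A B) B (L.meet_le_right A B) (p B d' hBd (V d')) := by
          calc p (L.meet A B) A (L.meet_le_left A B) (p A d hAd (V d))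
              = p (L.meet A B) d hABd (V d) := hcomp (L.meet A B) A d (L.meet_le_left A B) hAd (V d)
            _ = p (L.meet A B) d' hABd' (V d') := P1 d (hΓΔ hd) d' (hΓΔ hd') (L.meet A B) hABd hABd'
            _ = p (L.meet A B) B (L.meet_le_right A B) (p B d' hBd (V d')) :=
                (hcomp (L.meet A B) B d' (L.meet_le_right A B) hBd (V d')).symm
        obtain ⟨z, hz1, hz2⟩ := hcor A B hAB (p A d hAd (V d)) (p B d' hBd (V d')) hmatch
        refine ⟨p t₀ (L.join A B) heq.ge z, ?_⟩
        intro e he k h1 h2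
        rcases Finset.mem_insert.mp he with rfl | he
        · -- e = d
          have hkA : k ≤ A := DAL.le_meet L h1 h2
          calc p k t₀ h1 (p t₀ (L.join A B) heq.ge z)
              = p k (L.join A B) (h1.trans heq.ge) z := hcomp k t₀ (L.join A B) h1 heq.ge z
            _ = p k A hkA (p A (L.join A B) (L.le_join_left A B hAB) z) :=
                (hcomp k A (L.join A B) hkA (L.le_join_left A B hAB) z).symm
            _ = p k A hkA (p A e hAd (V e)) := by rw [hz1]
            _ = p k e h2 (V e) := hcomp k A e hkA hAd (V e)
        · -- e = d'
          have he' : e = d' := Finset.mem_singleton.mp he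
          subst he'
          have hkB : k ≤ B := DAL.le_meet L h1 h2
          calc p k t₀ h1 (p t₀ (L.join A B) heq.ge z)
              = p k (L.join A B) (h1.trans heq.ge) z := hcomp k t₀ (L.join A B) h1 heq.ge z
            _ = p k B hkB (p B (L.join A B) (L.le_join_right A B hAB) z) :=
                (hcomp k B (L.join A B) hkB (L.le_join_right A B hAB) z).symm
            _ = p k B hkB (p B e hBd (V e)) := by rw [hz2]
            _ = p k e h2 (V e) := hcomp k B e hkB hBd (V e)

end Merging

section MainFin

variable {I : Type*} [PartialOrder I] (L : DistribAlmostLattice I)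
  (X : I → Type*) [∀ i, Nonempty (X i)]
  (p : ∀ i j : I, i ≤ j → X j → X i)

/-- Matching of thread values at arbitrary common lower bounds. -/
theorem DAL.ymatch
    (hcomp : ∀ i j k : I, ∀ hij : i ≤ j, ∀ hjk : j ≤ k, ∀ x : X k,
      p i j hij (p j k hjk x) = p i k (hij.trans hjk) x)
    (F : Set I) (hF : IsClosedSubset L F) (y : ∀ i, X i)
    (hy : ∀ k ∈ F, ∀ j ∈ F, ∀ h : k ≤ j, p k j h (y j) = y k) :
    ∀ c ∈ F, ∀ c' ∈ F, ∀ k : I, ∀ h1 : k ≤ c, ∀ h2 : k ≤ c',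
      p k c h1 (y c) = p k c' h2 (y c') := by
  intro c hc c' hc' k h1 h2
  have hm : L.meet c c' ∈ F := (hF c hc c' hc').1
  have hmc : L.meet c c' ≤ c := L.meet_le_left c c'
  have hmc' : L.meet c c' ≤ c' := L.meet_le_right c c'
  have hkm : k ≤ L.meet c c' := DAL.le_meet L h1 h2
  calc p k c h1 (y c)
      = p k (L.meet c c') hkm (p (L.meet c c') c hmc (y c)) :=
        (hcomp k (L.meet c c') c hkm hmc (y c)).symm
    _ = p k (L.meet c c') hkm (y (L.meet c c')) := by rw [hy (L.meet c c') hm c hc hmc]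
    _ = p k (L.meet c c') hkm (p (L.meet c c') c' hmc' (y c')) := by
        rw [hy (L.meet c c') hm c' hc' hmc']
    _ = p k c' h2 (y c') := hcomp k (L.meet c c') c' hkm hmc' (y c')

theorem DAL.mainfin
    (hsurj : ∀ i j : I, ∀ hij : i ≤ j, Function.Surjective (p i j hij))
    (hid : ∀ i : I, ∀ hii : i ≤ i, ∀ x : X i, p i i hii x = x)
    (hcomp : ∀ i j k : I, ∀ hij : i ≤ j, ∀ hjk : j ≤ k, ∀ x : X k,
      p i j hij (p j k hjk x) = p i k (hij.trans hjk) x)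
    (hcor : ∀ i j : I, ∀ hub : ∃ u, i ≤ u ∧ j ≤ u, ∀ xi : X i, ∀ xj : X j,
      p (L.meet i j) i (L.meet_le_left i j) xi =
        p (L.meet i j) j (L.meet_le_right i j) xj →
      ∃ z : X (L.join i j),
        p i (L.join i j) (L.le_join_left i j hub) z = xi ∧
        p j (L.join i j) (L.le_join_right i j hub) z = xj)
    (F : Set I) (hF : IsClosedSubset L F) (y : ∀ i, X i)
    (hy : ∀ k ∈ F, ∀ j ∈ F, ∀ h : k ≤ j, p k j h (y j) = y k)
    (C : Finset I) (hC : IsClosedSubset L (↑C : Set I)) :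
    ∃ w : ∀ i, X i,
      (∀ j ∈ C, ∀ k ∈ C, ∀ h : k ≤ j, p k j h (w j) = w k) ∧
      (∀ j ∈ C, j ∈ F → w j = y j) := by
  classical
  have H : ∀ n (S : Finset I) (w : ∀ i, X i), S ⊆ C →
      (∀ s ∈ S, ∀ c ∈ C, s ≤ c → c ∈ S) →
      (∀ s ∈ S, s ∈ F → w s = y s) →
      (∀ s ∈ S, ∀ s' ∈ S, ∀ k : I, ∀ h1 : k ≤ s, ∀ h2 : k ≤ s',
        p k s h1 (w s) = p k s' h2 (w s')) →
      (∀ s ∈ S, ∀ c ∈ C, c ∈ F → ∀ k : I, ∀ h1 : k ≤ s, ∀ h2 : k ≤ c,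
        p k s h1 (w s) = p k c h2 (y c)) →
      (C \ S).card = n →
      ∃ w : ∀ i, X i,
        (∀ j ∈ C, ∀ k ∈ C, ∀ h : k ≤ j, p k j h (w j) = w k) ∧
        (∀ j ∈ C, j ∈ F → w j = y j) := by
    intro n
    induction n with
    | zero =>
      intro S w hSC hup inv2 inv3 inv4 hcard
      have hCS : C ⊆ S := by
        intro c hc
        by_contra hcS
        have : c ∈ C \ S := Finset.mem_sdiff.mpr ⟨hc, hcS⟩
        have := Finset.card_pos.mpr ⟨c, this⟩
        omega
      refine ⟨w, ?_, ?_⟩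
      · intro j hj k hk h
        have := inv3 j (hCS hj) k (hCS hk) k h le_rfl
        rwa [hid k le_rfl (w k)] at this
      · intro j hj hjF
        exact inv2 j (hCS hj) hjF
    | succ n IH =>
      intro S w hSC hup inv2 inv3 inv4 hcard
      have hne : (C \ S).Nonempty := Finset.card_pos.mp (by omega)
      obtain ⟨t₀, ht₀, hmax⟩ : ∃ m ∈ C \ S, ∀ x ∈ C \ S, ¬ m < x := by
        obtain ⟨m, hm⟩ := Finset.exists_maximal hne
        exact ⟨m, hm.1, fun x hx hlt => lt_irrefl _ (lt_of_lt_of_le hlt (hm.2 hx hlt.le))⟩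
      have ht₀C : t₀ ∈ C := (Finset.mem_sdiff.mp ht₀).1
      have ht₀S : t₀ ∉ S := (Finset.mem_sdiff.mp ht₀).2
      have hS'C : insert t₀ S ⊆ C := Finset.insert_subset ht₀C hSC
      have hup' : ∀ s ∈ insert t₀ S, ∀ c ∈ C, s ≤ c → c ∈ insert t₀ S := by
        intro s hs c hcC hsc
        rcases Finset.mem_insert.mp hs with rfl | hs
        · by_cases hcS : c ∈ S
          · exact Finset.mem_insert_of_mem hcS
          · have hc : c ∈ C \ S := Finset.mem_sdiff.mpr ⟨hcC, hcS⟩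
            have hnlt : ¬ s < c := hmax c hc
            have : c = s := le_antisymm (by by_contra h; exact hnlt (lt_of_le_of_ne hsc (fun hh => h (hh ▸ le_rfl)))) hsc
            exact this ▸ Finset.mem_insert_self _ _
        · exact Finset.mem_insert_of_mem (hup s hs c hcC hsc)
      have hcard' : (C \ insert t₀ S).card = n := by
        rw [Finset.sdiff_insert, Finset.card_erase_of_mem ht₀, hcard]
        omega
      by_cases ht₀F : t₀ ∈ F
      · -- forced value y t₀
        set w' := Function.update w t₀ (y t₀) with hw'def
        have hw's : ∀ s, s ≠ t₀ → w' s = w s := fun s hs => Function.update_of_ne hs _ _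
        have hw't : w' t₀ = y t₀ := Function.update_self _ _ _
        have hsne : ∀ s ∈ S, s ≠ t₀ := fun s hs h => ht₀S (h ▸ hs)
        refine IH (insert t₀ S) w' hS'C hup' ?_ ?_ ?_ hcard'
        · -- inv2
          intro s hs hsF
          rcases Finset.mem_insert.mp hs with heq | hsS
          · subst heq; exact hw't
          · rw [hw's s (hsne s hsS)]; exact inv2 s hsS hsF
        · -- inv3
          intro s hs s' hs' k h1 h2
          rcases Finset.mem_insert.mp hs with heq | hsS
          · subst heq
            rcases Finset.mem_insert.mp hs' with heq' | hs'S
            · subst heq'; rfl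
            · rw [hw't, hw's s' (hsne s' hs'S)]
              exact (inv4 s' hs'S _ ht₀C ht₀F k h2 h1).symm
          · rcases Finset.mem_insert.mp hs' with heq' | hs'S
            · subst heq'
              rw [hw't, hw's s (hsne s hsS)]
              exact inv4 s hsS _ ht₀C ht₀F k h1 h2
            · rw [hw's s (hsne s hsS), hw's s' (hsne s' hs'S)]
              exact inv3 s hsS s' hs'S k h1 h2
        · -- inv4
          intro s hs c hcC hcF k h1 h2
          rcases Finset.mem_insert.mp hs with heq | hsS
          · subst heq
            rw [hw't]
            exact DAL.ymatch L X p hcomp F hF y hy _ ht₀F c hcF k h1 h2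
          · rw [hw's s (hsne s hsS)]
            exact inv4 s hsS c hcC hcF k h1 h2
      · -- amalgamated value
        set Δ : Finset I := S ∪ C.filter (fun c => c ∈ F) with hΔdef
        set V : ∀ i, X i := fun d => if d ∈ S then w d else y d with hVdef
        have hVS : ∀ d ∈ S, V d = w d := fun d hd => if_pos hd
        have hVn : ∀ d, d ∉ S → V d = y d := fun d hd => if_neg hd
        have hmemΔ : ∀ d, d ∈ Δ → d ∈ S ∨ (d ∈ C ∧ d ∈ F ∧ d ∉ S) := by
          intro d hd
          by_cases hdS : d ∈ S
          · exact Or.inl hdS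
          · rcases Finset.mem_union.mp hd with h | h
            · exact absurd h hdS
            · have := Finset.mem_filter.mp h
              exact Or.inr ⟨this.1, this.2, hdS⟩
        have hVFy : ∀ d ∈ C, d ∈ F → V d = y d := by
          intro d hdC hdF
          by_cases hdS : d ∈ S
          · rw [hVS d hdS]; exact inv2 d hdS hdF
          · exact if_neg hdS
        have hΔC : Δ ⊆ C := by
          intro d hd
          rcases hmemΔ d hd with h | h
          · exact hSC h
          · exact h.1
        have hSΔ : ∀ s ∈ S, s ∈ Δ := fun s hs => Finset.mem_union_left _ hs
        have hFΔ : ∀ c ∈ C, c ∈ F → c ∈ Δ := fun c hc hcF =>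
          Finset.mem_union_right _ (Finset.mem_filter.mpr ⟨hc, hcF⟩)
        have P1 : ∀ d ∈ Δ, ∀ d' ∈ Δ, ∀ k : I, ∀ h1 : k ≤ d, ∀ h2 : k ≤ d',
            p k d h1 (V d) = p k d' h2 (V d') := by
          intro d hd d' hd' k h1 h2
          rcases hmemΔ d hd with hdS | ⟨hdC, hdF, hdS⟩ <;>
            rcases hmemΔ d' hd' with hd'S | ⟨hd'C, hd'F, hd'S⟩
          · rw [hVS d hdS, hVS d' hd'S]; exact inv3 d hdS d' hd'S k h1 h2
          · rw [hVS d hdS, hVn d' hd'S]; exact inv4 d hdS d' hd'C hd'F k h1 h2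
          · rw [hVn d hdS, hVS d' hd'S]; exact (inv4 d' hd'S d hdC hdF k h2 h1).symm
          · rw [hVn d hdS, hVn d' hd'S]
            exact DAL.ymatch L X p hcomp F hF y hy d hdF d' hd'F k h1 h2
        have P2 : ∀ d ∈ Δ, ∀ d' ∈ Δ, (∃ u, d ≤ u ∧ d' ≤ u) → L.join d d' ∈ Δ := by
          intro d hd d' hd' hub
          have hjC : L.join d d' ∈ C := (hC d (hΔC hd) d' (hΔC hd')).2 hub
          rcases hmemΔ d hd with hdS | ⟨hdC, hdF, _⟩
          · exact hSΔ _ (hup d hdS (L.join d d') hjC (L.le_join_left d d' hub))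
          · rcases hmemΔ d' hd' with hd'S | ⟨hd'C, hd'F, _⟩
            · exact hSΔ _ (hup d' hd'S (L.join d d') hjC (L.le_join_right d d' hub))
            · exact hFΔ _ hjC ((hF d hdF d' hd'F).2 hub)
        have P3 : ∀ d ∈ Δ, ∀ d' ∈ Δ, ∀ h : d ≤ d', p d d' h (V d') = V d := by
          intro d hd d' hd' h
          rcases hmemΔ d' hd' with hd'S | ⟨hd'C, hd'F, hd'S⟩
          · rcases hmemΔ d hd with hdS | ⟨hdC, hdF, hdS⟩
            · rw [hVS d hdS, hVS d' hd'S]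
              have := inv3 d' hd'S d hdS d h le_rfl
              rwa [hid d le_rfl (w d)] at this
            · rw [hVn d hdS, hVS d' hd'S]
              have := inv4 d' hd'S d hdC hdF d h le_rfl
              rwa [hid d le_rfl (y d)] at this
          · rcases hmemΔ d hd with hdS | ⟨hdC, hdF, hdS⟩
            · exact absurd (hup d hdS d' hd'C h) hd'S
            · rw [hVn d hdS, hVn d' hd'S]
              exact hy d hdF d' hd'F h
        obtain ⟨x, hx⟩ := DAL.merging L X p hsurj hid hcomp hcor t₀ Δ V P1 P2 P3
          Δ.card Δ le_rfl (Finset.Subset.refl Δ)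
        set w' := Function.update w t₀ x with hw'def
        have hw's : ∀ s, s ≠ t₀ → w' s = w s := fun s hs => Function.update_of_ne hs _ _
        have hw't : w' t₀ = x := Function.update_self _ _ _
        have hsne : ∀ s ∈ S, s ≠ t₀ := fun s hs h => ht₀S (h ▸ hs)
        refine IH (insert t₀ S) w' hS'C hup' ?_ ?_ ?_ hcard'
        · -- inv2
          intro s hs hsF
          rcases Finset.mem_insert.mp hs with heq | hsS
          · subst heq; exact absurd hsF ht₀F
          · rw [hw's s (hsne s hsS)]; exact inv2 s hsS hsF
        · -- inv3
          intro s hs s' hs' k h1 h2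
          rcases Finset.mem_insert.mp hs with heq | hsS
          · subst heq
            rcases Finset.mem_insert.mp hs' with heq' | hs'S
            · subst heq'; rfl
            · rw [hw't, hw's s' (hsne s' hs'S)]
              have := hx s' (hSΔ s' hs'S) k h1 h2
              rwa [hVS s' hs'S] at this
          · rcases Finset.mem_insert.mp hs' with heq' | hs'S
            · subst heq'
              rw [hw't, hw's s (hsne s hsS)]
              have := hx s (hSΔ s hsS) k h2 h1
              rw [hVS s hsS] at this
              exact this.symm
            · rw [hw's s (hsne s hsS), hw's s' (hsne s' hs'S)]
              exact inv3 s hsS s' hs'S k h1 h2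
        · -- inv4
          intro s hs c hcC hcF k h1 h2
          rcases Finset.mem_insert.mp hs with heq | hsS
          · subst heq
            rw [hw't]
            have := hx c (hFΔ c hcC hcF) k h1 h2
            rwa [hVFy c hcC hcF] at this
          · rw [hw's s (hsne s hsS)]
            exact inv4 s hsS c hcC hcF k h1 h2
  exact H (C \ ∅).card ∅ (fun i => Classical.arbitrary _) (by simp) (by simp) (by simp)
    (by simp) (by simp) rfl

end MainFin

section Outer

variable {I : Type*} [PartialOrder I]

theorem DAL.exists_thread (L : DistribAlmostLattice I)
    (X : I → Type*) [∀ i, TopologicalSpace (X i)]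
    [∀ i, Nonempty (X i)] [∀ i, CompactSpace (X i)] [∀ i, T2Space (X i)]
    (p : ∀ i j : I, i ≤ j → X j → X i)
    (hcont : ∀ i j : I, ∀ hij : i ≤ j, Continuous (p i j hij))
    (hsurj : ∀ i j : I, ∀ hij : i ≤ j, Function.Surjective (p i j hij))
    (hid : ∀ i : I, ∀ hii : i ≤ i, ∀ x : X i, p i i hii x = x)
    (hcomp : ∀ i j k : I, ∀ hij : i ≤ j, ∀ hjk : j ≤ k, ∀ x : X k,
      p i j hij (p j k hjk x) = p i k (hij.trans hjk) x)
    (hcor : ∀ i j : I, ∀ hub : ∃ u, i ≤ u ∧ j ≤ u, ∀ xi : X i, ∀ xj : X j,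
      p (L.meet i j) i (L.meet_le_left i j) xi =
        p (L.meet i j) j (L.meet_le_right i j) xj →
      ∃ z : X (L.join i j),
        p i (L.join i j) (L.le_join_left i j hub) z = xi ∧
        p j (L.join i j) (L.le_join_right i j hub) z = xj)
    (F : Set I) (hF : IsClosedSubset L F) (y : ∀ i, X i)
    (hy : ∀ k ∈ F, ∀ j ∈ F, ∀ h : k ≤ j, p k j h (y j) = y k) :
    ∃ x : ∀ i, X i, (∀ i j : I, ∀ hij : i ≤ j, p i j hij (x j) = x i) ∧
      ∀ j ∈ F, x j = y j := by
  classical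
  let Z : ({q : I × I // q.1 ≤ q.2} ⊕ {j : I // j ∈ F}) → Set (∀ i, X i) :=
    Sum.elim (fun q => {x | p q.1.1 q.1.2 q.2 (x q.1.2) = x q.1.1})
      (fun j => {x | x j.1 = y j.1})
  have hZc : ∀ q, IsClosed (Z q) := by
    rintro (q | j)
    · exact isClosed_eq ((hcont _ _ q.2).comp (continuous_apply q.1.2)) (continuous_apply q.1.1)
    · exact isClosed_eq (continuous_apply j.1) continuous_const
  rcases Set.eq_empty_or_nonempty (⋂ q, Z q) with hemp | ⟨x, hx⟩
  · exfalso
    obtain ⟨u, hu⟩ := (isCompact_univ (X := ∀ i, X i)).elim_finite_subfamily_closed Z hZc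
      (by rw [Set.univ_inter]; exact hemp)
    set T : Finset I :=
      u.biUnion (fun q => Sum.elim (fun q' : {q : I × I // q.1 ≤ q.2} => {q'.1.1, q'.1.2})
        (fun j : {j : I // j ∈ F} => {j.1}) q) with hTdef
    obtain ⟨Cs, hCfin, hTC, hCcl⟩ := DAL.closure_exists L T
    have hCC : (↑hCfin.toFinset : Set I) = Cs := Set.Finite.coe_toFinset _
    obtain ⟨w, hw1, hw2⟩ := DAL.mainfin L X p hsurj hid hcomp hcor F hF y hy
      hCfin.toFinset (by rw [hCC]; exact hCcl)
    have hmemC : ∀ i ∈ T, i ∈ hCfin.toFinset := by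
      intro i hi
      exact hCfin.mem_toFinset.mpr (hTC (Finset.mem_coe.mpr hi))
    set xw : ∀ i, X i := fun k => if hk : k ∈ hCfin.toFinset then w k else Classical.arbitrary _
      with hxwdef
    have hxwC : ∀ k ∈ hCfin.toFinset, xw k = w k := fun k hk => dif_pos hk
    have hmem : xw ∈ ⋂ q ∈ u, Z q := by
      refine Set.mem_iInter₂.mpr ?_
      rintro (q | j) hq
      · have h1 : q.1.1 ∈ T := Finset.mem_biUnion.mpr ⟨Sum.inl q, hq, by simp⟩
        have h2 : q.1.2 ∈ T := Finset.mem_biUnion.mpr ⟨Sum.inl q, hq, by simp⟩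
        show p q.1.1 q.1.2 q.2 (xw q.1.2) = xw q.1.1
        rw [hxwC _ (hmemC _ h2), hxwC _ (hmemC _ h1)]
        exact hw1 q.1.2 (hmemC _ h2) q.1.1 (hmemC _ h1) q.2
      · have h1 : j.1 ∈ T := Finset.mem_biUnion.mpr ⟨Sum.inr j, hq, by simp⟩
        show xw j.1 = y j.1
        rw [hxwC _ (hmemC _ h1)]
        exact hw2 j.1 (hmemC _ h1) j.2
    have hcontra := Set.mem_inter (Set.mem_univ xw) hmem
    rw [hu] at hcontra
    exact Set.notMem_empty xw hcontra
  · refine ⟨x, ?_, ?_⟩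
    · intro i j hij
      exact Set.mem_iInter.mp hx (Sum.inl ⟨(i, j), hij⟩)
    · intro j hj
      exact Set.mem_iInter.mp hx (Sum.inr ⟨j, hj⟩)

end Outer

/-- Any thread over a closed `F ⊆ I` extends to an element of `X_ℓ`; in particular all
projections `p^ℓ_i : X_ℓ → X_i` are surjective and `X_ℓ` is nonempty. -/
theorem thread_extends_to_Xl
    {I : Type*} [PartialOrder I] (L : DistribAlmostLattice I)
    (X : I → Type*) [∀ i, TopologicalSpace (X i)]
    [∀ i, Nonempty (X i)] [∀ i, CompactSpace (X i)] [∀ i, T2Space (X i)]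
    (p : ∀ i j : I, i ≤ j → X j → X i)
    (hcont : ∀ i j : I, ∀ hij : i ≤ j, Continuous (p i j hij))
    (hopen : ∀ i j : I, ∀ hij : i ≤ j, IsOpenMap (p i j hij))
    (hsurj : ∀ i j : I, ∀ hij : i ≤ j, Function.Surjective (p i j hij))
    (hid : ∀ i : I, ∀ hii : i ≤ i, ∀ x : X i, p i i hii x = x)
    (hcomp : ∀ i j k : I, ∀ hij : i ≤ j, ∀ hjk : j ≤ k, ∀ x : X k,
      p i j hij (p j k hjk x) = p i k (hij.trans hjk) x)
    (hcor : ∀ i j : I, ∀ hub : ∃ u, i ≤ u ∧ j ≤ u, ∀ xi : X i, ∀ xj : X j,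
      p (L.meet i j) i (L.meet_le_left i j) xi =
        p (L.meet i j) j (L.meet_le_right i j) xj →
      ∃ z : X (L.join i j),
        p i (L.join i j) (L.le_join_left i j hub) z = xi ∧
        p j (L.join i j) (L.le_join_right i j hub) z = xj) :
    (∀ F : Set I, IsClosedSubset L F → ∀ y : ∀ i, X i, InY X p F y →
      ∃ x : ∀ i, X i, InXl X p x ∧ ∀ j ∈ F, x j = y j) ∧
    (∀ i : I, ∀ xi : X i, ∃ x : ∀ i, X i, InXl X p x ∧ x i = xi) ∧
    (∀ i : I, Function.Surjective
      (fun x : {x : ∀ i, X i // InXl X p x} => x.1 i)) ∧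
    Nonempty {x : ∀ i, X i // InXl X p x} := by
  classical
  have main : ∀ F : Set I, IsClosedSubset L F → ∀ y : ∀ i, X i, InY X p F y →
      ∃ x : ∀ i, X i, InXl X p x ∧ ∀ j ∈ F, x j = y j := by
    intro F hF y hy
    obtain ⟨x, hx1, hx2⟩ := DAL.exists_thread L X p hcont hsurj hid hcomp hcor F hF y hy
    exact ⟨x, hx1, hx2⟩
  have part2 : ∀ i : I, ∀ xi : X i, ∃ x : ∀ i, X i, InXl X p x ∧ x i = xi := by
    intro i xi
    have hmeet : L.meet i i = i :=
      IsGLB.unique (L.meet_isGLB i i)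
        (by rw [Set.pair_eq_singleton]; exact isGLB_singleton)
    have hcl : IsClosedSubset L ({i} : Set I) := by
      intro a ha b hb
      have ha' := Set.mem_singleton_iff.mp ha
      have hb' := Set.mem_singleton_iff.mp hb
      rw [ha', hb']
      constructor
      · exact Set.mem_singleton_iff.mpr hmeet
      · intro hub
        exact Set.mem_singleton_iff.mpr (IsLUB.unique (L.join_isLUB i i hub)
          (by rw [Set.pair_eq_singleton]; exact isLUB_singleton))
    set y : ∀ j, X j := Function.update (fun j => Classical.arbitrary (X j)) i xi with hydef
    have hyi : y i = xi := Function.update_self _ _ _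
    have hInY : InY X p ({i} : Set I) y := by
      intro k hk j hj h
      have hk' := Set.mem_singleton_iff.mp hk
      have hj' := Set.mem_singleton_iff.mp hj
      subst hk'; subst hj'
      exact hid _ h _
    obtain ⟨x, hx1, hx2⟩ := main {i} hcl y hInY
    exact ⟨x, hx1, (hx2 i rfl).trans hyi⟩
  refine ⟨main, part2, ?_, ?_⟩
  · intro i xi
    obtain ⟨x, hx1, hx2⟩ := part2 i xi
    exact ⟨⟨x, hx1⟩, hx2⟩
  · obtain ⟨x, hx1, _⟩ := main ∅ (fun a ha => absurd ha (Set.notMem_empty a))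
      (fun j => Classical.arbitrary _) (fun k hk => absurd hk (Set.notMem_empty k))
    exact ⟨⟨x, hx1⟩⟩
end

section
/- In the topological amalgamated limit setting, correctness holds for the extended system: for all i, j ∈ I (whether or not i ∨ j exists) and all x_i ∈ X_i, x_j ∈ X_j with p^i_{i∧j}(x_i) = p^j_{i∧j}(x_j), there exists x ∈ X_ℓ with p^ℓ_i(x) = x_i and p^ℓ_j(x) = x_j. -/
section Aux

variable {I : Type*} [PartialOrder I] (L : DistribAlmostLattice I)

theorem DAL_le_meet {c i j : I} (h1 : c ≤ i) (h2 : c ≤ j) : c ≤ L.meet i j := by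
  refine (L.meet_isGLB i j).2 ?_
  intro x hx
  rcases Set.mem_insert_iff.mp hx with rfl | hx2
  · exact h1
  · rw [Set.mem_singleton_iff] at hx2; subst hx2; exact h2

theorem DAL_join_le {i j u : I} (hub : ∃ w, i ≤ w ∧ j ≤ w) (h1 : i ≤ u) (h2 : j ≤ u) :
    L.join i j ≤ u := by
  refine (L.join_isLUB i j hub).2 ?_
  intro x hx
  rcases Set.mem_insert_iff.mp hx with rfl | hx2
  · exact h1
  · rw [Set.mem_singleton_iff] at hx2; subst hx2; exact h2

include L

/-- Any finite subset of a distributive almost-lattice is covered by two elements. -/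
theorem DAL_exists_cover (i₀ : I) (E : Finset I) :
    ∃ u v : I, ∀ e ∈ E, e ≤ u ∨ e ≤ v := by
  classical
  induction E using Finset.induction_on with
  | empty => exact ⟨i₀, i₀, by simp⟩
  | @insert e E' hne ih =>
    obtain ⟨u, v, hcov⟩ := ih
    rcases L.two_of_three e u v with h | h | h
    · refine ⟨L.join e u, v, ?_⟩
      intro e' he'
      rcases Finset.mem_insert.mp he' with rfl | he'E
      · exact Or.inl (L.le_join_left _ u h)
      · rcases hcov e' he'E with h' | h'
        · exact Or.inl (h'.trans (L.le_join_right e u h))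
        · exact Or.inr h'
    · refine ⟨u, L.join e v, ?_⟩
      intro e' he'
      rcases Finset.mem_insert.mp he' with rfl | he'E
      · exact Or.inr (L.le_join_left _ v h)
      · rcases hcov e' he'E with h' | h'
        · exact Or.inl h'
        · exact Or.inr (h'.trans (L.le_join_right e v h))
    · refine ⟨L.join u v, e, ?_⟩
      intro e' he'
      rcases Finset.mem_insert.mp he' with rfl | he'E
      · exact Or.inr le_rfl
      · rcases hcov e' he'E with h' | h'
        · exact Or.inl (h'.trans (L.le_join_left u v h))
        · exact Or.inl (h'.trans (L.le_join_right u v h))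

/-- Key finite lemma: given a two-element cover `{w₁, w₂}` of a finite set `E`,
with `i ≤ w₁`, one can assemble a global point that is consistent on all comparable
pairs of `E` and passes through `xi`, `xj`. -/
theorem DAL_assemble
    (X : I → Type*) [∀ i, Nonempty (X i)]
    (p : ∀ i j : I, i ≤ j → X j → X i)
    (hsurj : ∀ i j : I, ∀ hij : i ≤ j, Function.Surjective (p i j hij))
    (hid : ∀ i : I, ∀ hii : i ≤ i, ∀ x : X i, p i i hii x = x)
    (hcomp : ∀ i j k : I, ∀ hij : i ≤ j, ∀ hjk : j ≤ k, ∀ x : X k,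
      p i j hij (p j k hjk x) = p i k (hij.trans hjk) x)
    (hcor : ∀ i j : I, ∀ hub : ∃ u, i ≤ u ∧ j ≤ u, ∀ xi : X i, ∀ xj : X j,
      p (L.meet i j) i (L.meet_le_left i j) xi =
        p (L.meet i j) j (L.meet_le_right i j) xj →
      ∃ z : X (L.join i j),
        p i (L.join i j) (L.le_join_left i j hub) z = xi ∧
        p j (L.join i j) (L.le_join_right i j hub) z = xj)
    (i j : I) (xi : X i) (xj : X j)
    (hxij : p (L.meet i j) i (L.meet_le_left i j) xi =
        p (L.meet i j) j (L.meet_le_right i j) xj)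
    (w₁ w₂ : I) (hi : i ≤ w₁) (hj : j ≤ w₁ ∨ j ≤ w₂)
    (E : Finset I) (hcov : ∀ e ∈ E, e ≤ w₁ ∨ e ≤ w₂) :
    ∃ x : ∀ l, X l, x i = xi ∧ x j = xj ∧
      ∀ a b : I, ∀ h : a ≤ b, a ∈ E → b ∈ E → p a b h (x b) = x a := by
  classical
  -- abbreviations
  set m₁ := L.meet j w₁ with hm₁def
  have hm₁w₁ : m₁ ≤ w₁ := L.meet_le_right j w₁
  have hm₁j : m₁ ≤ j := L.meet_le_left j w₁
  have hub₁ : ∃ u, i ≤ u ∧ m₁ ≤ u := ⟨w₁, hi, hm₁w₁⟩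
  -- compatibility for the first correctness application
  have compat₁ : p (L.meet i m₁) i (L.meet_le_left i m₁) xi =
      p (L.meet i m₁) m₁ (L.meet_le_right i m₁) (p m₁ j hm₁j xj) := by
    have hni : L.meet i m₁ ≤ i := L.meet_le_left i m₁
    have hnm : L.meet i m₁ ≤ m₁ := L.meet_le_right i m₁
    have hnj : L.meet i m₁ ≤ j := hnm.trans hm₁j
    have hnk : L.meet i m₁ ≤ L.meet i j := DAL_le_meet L hni hnj
    calc p (L.meet i m₁) i hni xi
        = p (L.meet i m₁) (L.meet i j) hnk (p (L.meet i j) i (L.meet_le_left i j) xi) :=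
          (hcomp _ _ _ hnk (L.meet_le_left i j) xi).symm
      _ = p (L.meet i m₁) (L.meet i j) hnk (p (L.meet i j) j (L.meet_le_right i j) xj) := by
          rw [hxij]
      _ = p (L.meet i m₁) j hnj xj := hcomp _ _ _ hnk (L.meet_le_right i j) xj
      _ = p (L.meet i m₁) m₁ hnm (p m₁ j hm₁j xj) := (hcomp _ _ _ hnm hm₁j xj).symm
  obtain ⟨z', hz'i, hz'm⟩ := hcor i m₁ hub₁ xi (p m₁ j hm₁j xj) compat₁
  have he₁w₁ : L.join i m₁ ≤ w₁ := DAL_join_le L hub₁ hi hm₁w₁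
  obtain ⟨z₁, hz₁⟩ := hsurj (L.join i m₁) w₁ he₁w₁ z'
  have hz₁i : p i w₁ hi z₁ = xi := by
    have h1 : p i (L.join i m₁) (L.le_join_left i m₁ hub₁) (p (L.join i m₁) w₁ he₁w₁ z₁)
        = p i w₁ ((L.le_join_left i m₁ hub₁).trans he₁w₁) z₁ :=
      hcomp _ _ _ _ he₁w₁ z₁
    rw [hz₁, hz'i] at h1
    exact h1.symm
  have hz₁m : p m₁ w₁ hm₁w₁ z₁ = p m₁ j hm₁j xj := by
    have h1 : p m₁ (L.join i m₁) (L.le_join_right i m₁ hub₁) (p (L.join i m₁) w₁ he₁w₁ z₁)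
        = p m₁ w₁ ((L.le_join_right i m₁ hub₁).trans he₁w₁) z₁ :=
      hcomp _ _ _ _ he₁w₁ z₁
    rw [hz₁, hz'm] at h1
    exact h1.symm
  have z1a' : ∀ c, ∀ h1 : c ≤ i, ∀ h2 : c ≤ w₁, p c w₁ h2 z₁ = p c i h1 xi := by
    intro c h1 h2
    have := hcomp c i w₁ h1 hi z₁
    rw [hz₁i] at this
    exact this.symm
  have z1b' : ∀ c, ∀ h1 : c ≤ j, ∀ h2 : c ≤ w₁, p c w₁ h2 z₁ = p c j h1 xj := by
    intro c h1 h2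
    have hcm : c ≤ m₁ := DAL_le_meet L h1 h2
    have e1 := hcomp c m₁ w₁ hcm hm₁w₁ z₁
    rw [hz₁m] at e1
    have e2 := hcomp c m₁ j hcm hm₁j xj
    exact e1.symm.trans e2
  -- second point
  set m₂ := L.meet j w₂ with hm₂def
  set m₃ := L.meet w₁ w₂ with hm₃def
  have hm₂w₂ : m₂ ≤ w₂ := L.meet_le_right j w₂
  have hm₂j : m₂ ≤ j := L.meet_le_left j w₂
  have hm₃w₂ : m₃ ≤ w₂ := L.meet_le_right w₁ w₂
  have hm₃w₁ : m₃ ≤ w₁ := L.meet_le_left w₁ w₂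
  have hub₂ : ∃ u, m₂ ≤ u ∧ m₃ ≤ u := ⟨w₂, hm₂w₂, hm₃w₂⟩
  have compat₂ : p (L.meet m₂ m₃) m₂ (L.meet_le_left m₂ m₃) (p m₂ j hm₂j xj) =
      p (L.meet m₂ m₃) m₃ (L.meet_le_right m₂ m₃) (p m₃ w₁ hm₃w₁ z₁) := by
    have hn₂j : L.meet m₂ m₃ ≤ j := (L.meet_le_left m₂ m₃).trans hm₂j
    have hn₂w₁ : L.meet m₂ m₃ ≤ w₁ := (L.meet_le_right m₂ m₃).trans hm₃w₁
    calc p (L.meet m₂ m₃) m₂ (L.meet_le_left m₂ m₃) (p m₂ j hm₂j xj)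
        = p (L.meet m₂ m₃) j hn₂j xj := hcomp _ _ _ _ hm₂j xj
      _ = p (L.meet m₂ m₃) w₁ hn₂w₁ z₁ := (z1b' _ hn₂j hn₂w₁).symm
      _ = p (L.meet m₂ m₃) m₃ (L.meet_le_right m₂ m₃) (p m₃ w₁ hm₃w₁ z₁) :=
          (hcomp _ _ _ _ hm₃w₁ z₁).symm
  obtain ⟨z'', hz''₂, hz''₃⟩ := hcor m₂ m₃ hub₂ (p m₂ j hm₂j xj) (p m₃ w₁ hm₃w₁ z₁) compat₂
  have he₂w₂ : L.join m₂ m₃ ≤ w₂ := DAL_join_le L hub₂ hm₂w₂ hm₃w₂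
  obtain ⟨z₂, hz₂⟩ := hsurj (L.join m₂ m₃) w₂ he₂w₂ z''
  have hz₂m₂ : p m₂ w₂ hm₂w₂ z₂ = p m₂ j hm₂j xj := by
    have h1 : p m₂ (L.join m₂ m₃) (L.le_join_left m₂ m₃ hub₂) (p (L.join m₂ m₃) w₂ he₂w₂ z₂)
        = p m₂ w₂ ((L.le_join_left m₂ m₃ hub₂).trans he₂w₂) z₂ :=
      hcomp _ _ _ _ he₂w₂ z₂
    rw [hz₂, hz''₂] at h1
    exact h1.symm
  have hz₂m₃ : p m₃ w₂ hm₃w₂ z₂ = p m₃ w₁ hm₃w₁ z₁ := by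
    have h1 : p m₃ (L.join m₂ m₃) (L.le_join_right m₂ m₃ hub₂) (p (L.join m₂ m₃) w₂ he₂w₂ z₂)
        = p m₃ w₂ ((L.le_join_right m₂ m₃ hub₂).trans he₂w₂) z₂ :=
      hcomp _ _ _ _ he₂w₂ z₂
    rw [hz₂, hz''₃] at h1
    exact h1.symm
  have z2a' : ∀ c, ∀ h1 : c ≤ j, ∀ h2 : c ≤ w₂, p c w₂ h2 z₂ = p c j h1 xj := by
    intro c h1 h2
    have hcm : c ≤ m₂ := DAL_le_meet L h1 h2
    have e1 := hcomp c m₂ w₂ hcm hm₂w₂ z₂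
    rw [hz₂m₂] at e1
    have e2 := hcomp c m₂ j hcm hm₂j xj
    exact e1.symm.trans e2
  have z2b' : ∀ c, ∀ h1 : c ≤ w₁, ∀ h2 : c ≤ w₂, p c w₂ h2 z₂ = p c w₁ h1 z₁ := by
    intro c h1 h2
    have hcm : c ≤ m₃ := DAL_le_meet L h1 h2
    have e1 := hcomp c m₃ w₂ hcm hm₃w₂ z₂
    rw [hz₂m₃] at e1
    have e2 := hcomp c m₃ w₁ hcm hm₃w₁ z₁
    exact e1.symm.trans e2
  -- assemble the global point
  refine ⟨fun l => if h : l ≤ w₁ then p l w₁ h z₁ else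
    (if h2 : l ≤ w₂ then p l w₂ h2 z₂ else Classical.arbitrary _), ?_, ?_, ?_⟩
  · simp only [dif_pos hi]; exact hz₁i
  · by_cases hj1 : j ≤ w₁
    · simp only [dif_pos hj1]
      exact (z1b' j le_rfl hj1).trans (hid j le_rfl xj)
    · have hj2 : j ≤ w₂ := hj.resolve_left hj1
      simp only [dif_neg hj1, dif_pos hj2]
      exact (z2a' j le_rfl hj2).trans (hid j le_rfl xj)
  · intro a b hab haE hbE
    by_cases hb1 : b ≤ w₁
    · simp only [dif_pos hb1, dif_pos (hab.trans hb1)]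
      exact hcomp a b w₁ hab hb1 z₁
    · have hb2 : b ≤ w₂ := (hcov b hbE).resolve_left hb1
      simp only [dif_neg hb1, dif_pos hb2]
      by_cases ha1 : a ≤ w₁
      · simp only [dif_pos ha1]
        exact (hcomp a b w₂ hab hb2 z₂).trans (z2b' a ha1 (hab.trans hb2))
      · simp only [dif_neg ha1, dif_pos (hab.trans hb2)]
        exact hcomp a b w₂ hab hb2 z₂

end Aux

/-- Correctness holds for the extended system: any two points with equal projections to
`X_{i∧j}` are simultaneously realized by a point of `X_ℓ`. -/
theorem Xl_correctness
    {I : Type*} [PartialOrder I] (L : DistribAlmostLattice I)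
    (X : I → Type*) [∀ i, TopologicalSpace (X i)]
    [∀ i, Nonempty (X i)] [∀ i, CompactSpace (X i)] [∀ i, T2Space (X i)]
    (p : ∀ i j : I, i ≤ j → X j → X i)
    (hcont : ∀ i j : I, ∀ hij : i ≤ j, Continuous (p i j hij))
    (hopen : ∀ i j : I, ∀ hij : i ≤ j, IsOpenMap (p i j hij))
    (hsurj : ∀ i j : I, ∀ hij : i ≤ j, Function.Surjective (p i j hij))
    (hid : ∀ i : I, ∀ hii : i ≤ i, ∀ x : X i, p i i hii x = x)
    (hcomp : ∀ i j k : I, ∀ hij : i ≤ j, ∀ hjk : j ≤ k, ∀ x : X k,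
      p i j hij (p j k hjk x) = p i k (hij.trans hjk) x)
    (hcor : ∀ i j : I, ∀ hub : ∃ u, i ≤ u ∧ j ≤ u, ∀ xi : X i, ∀ xj : X j,
      p (L.meet i j) i (L.meet_le_left i j) xi =
        p (L.meet i j) j (L.meet_le_right i j) xj →
      ∃ z : X (L.join i j),
        p i (L.join i j) (L.le_join_left i j hub) z = xi ∧
        p j (L.join i j) (L.le_join_right i j hub) z = xj) :
    ∀ i j : I, ∀ xi : X i, ∀ xj : X j,
      p (L.meet i j) i (L.meet_le_left i j) xi =
        p (L.meet i j) j (L.meet_le_right i j) xj →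
      ∃ x : ∀ i, X i, InXl X p x ∧ x i = xi ∧ x j = xj := by
  classical
  intro i j xi xj hxij
  set T : Set (∀ l, X l) := {x | x i = xi ∧ x j = xj} with hTdef
  set C : {q : I × I // q.1 ≤ q.2} → Set (∀ l, X l) :=
    fun q => {x | p q.1.1 q.1.2 q.2 (x q.1.2) = x q.1.1} with hCdef
  suffices hne : (T ∩ ⋂ q, C q).Nonempty by
    obtain ⟨x, hxT, hxC⟩ := hne
    refine ⟨x, ?_, hxT.1, hxT.2⟩
    intro a b hab
    exact Set.mem_iInter.mp hxC ⟨(a, b), hab⟩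
  by_contra hcon
  rw [Set.not_nonempty_iff_eq_empty] at hcon
  have hTc : IsClosed T :=
    (isClosed_eq (continuous_apply i) continuous_const).inter
      (isClosed_eq (continuous_apply j) continuous_const)
  have hTcpt : IsCompact T := hTc.isCompact
  have hCc : ∀ q, IsClosed (C q) := fun q =>
    isClosed_eq ((hcont q.1.1 q.1.2 q.2).comp (continuous_apply q.1.2))
      (continuous_apply q.1.1)
  obtain ⟨u, hu⟩ := hTcpt.elim_finite_subfamily_closed C hCc hcon
  set E : Finset I :=
    (u.image (fun q => q.1.1) ∪ u.image (fun q => q.1.2)) ∪ {i, j} with hEdef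
  have hiE : i ∈ E := by
    apply Finset.mem_union_right
    exact Finset.mem_insert_self i {j}
  have hjE : j ∈ E := by
    apply Finset.mem_union_right
    exact Finset.mem_insert_of_mem (Finset.mem_singleton_self j)
  obtain ⟨u₀, v₀, hcov⟩ := DAL_exists_cover L i E
  have main : ∀ w₁ w₂ : I, i ≤ w₁ → (∀ e ∈ E, e ≤ w₁ ∨ e ≤ w₂) → False := by
    intro w₁ w₂ hiw hcov'
    obtain ⟨x, hx1, hx2, hx3⟩ :=
      DAL_assemble L X p hsurj hid hcomp hcor i j xi xj hxij w₁ w₂ hiw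
        (hcov' j hjE) E hcov'
    have hxmem : x ∈ T ∩ ⋂ q ∈ u, C q := by
      refine ⟨⟨hx1, hx2⟩, Set.mem_iInter₂.mpr ?_⟩
      intro q hq
      have h1 : q.1.1 ∈ E := by
        apply Finset.mem_union_left
        apply Finset.mem_union_left
        exact Finset.mem_image_of_mem _ hq
      have h2 : q.1.2 ∈ E := by
        apply Finset.mem_union_left
        apply Finset.mem_union_right
        exact Finset.mem_image_of_mem _ hq
      exact hx3 q.1.1 q.1.2 q.2 h1 h2
    rw [hu] at hxmem
    exact hxmem
  rcases hcov i hiE with hiu | hiv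
  · exact main u₀ v₀ hiu hcov
  · exact main v₀ u₀ hiv (fun e he => (hcov e he).symm)
end

section
/- In the topological amalgamated limit setting, for every i ∈ I the projection p^ℓ_i : X_ℓ → X_i is an open map; moreover it is a continuous surjection and p^ℓ_i = p^j_i ∘ p^ℓ_j for all i ≤ j. -/
/-! ### Auxiliary machinery for the main theorem -/

namespace AmalAux

section OrderLemmas

variable {I : Type*} [PartialOrder I] (L : DistribAlmostLattice I)

theorem le_meet {i j k : I} (h1 : k ≤ i) (h2 : k ≤ j) : k ≤ L.meet i j :=
  (L.meet_isGLB i j).2 (by rintro a (rfl | rfl) <;> assumption)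

theorem meet_comm (i j : I) : L.meet i j = L.meet j i :=
  (L.meet_isGLB i j).unique (by rw [Set.pair_comm]; exact L.meet_isGLB j i)

theorem join_of_le {i j : I} (h : i ≤ j) : L.join i j = j :=
  (L.join_isLUB i j ⟨j, h, le_rfl⟩).unique
    ⟨by rintro a (rfl | rfl) <;> simp [h], fun b hb => hb (Set.mem_insert_of_mem _ rfl)⟩

theorem meet_absorb {a b T : I} (h : a ≤ T) : L.meet a (L.meet b T) = L.meet a b :=
  (L.meet_isGLB a (L.meet b T)).unique
    ⟨by
      rintro w (rfl | rfl)
      · exact L.meet_le_left _ _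
      · exact le_meet L (L.meet_le_right _ _) ((L.meet_le_left _ _).trans h),
     fun w hw => le_meet L (hw (Set.mem_insert _ _))
      ((hw (Set.mem_insert_of_mem _ rfl)).trans (L.meet_le_left b T))⟩

/-- Consequence of condition (v): if `a₁, a₂` have no common upper bound and `a₁ ≤ T`,
then `T = a₁ ∨ (a₂ ∧ T)`. -/
theorem vT {a₁ a₂ T : I} (hnub : ¬∃ u, a₁ ≤ u ∧ a₂ ≤ u) (hle : a₁ ≤ T) :
    T = L.join a₁ (L.meet a₂ T) := by
  rcases L.cond_v a₁ a₂ T hnub with ⟨h1, _⟩ | h2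
  · exact absurd ⟨T, hle, le_rfl⟩ h1
  · exact (join_of_le L hle).symm.trans h2

end OrderLemmas

/-- A "state": at most two peaks `a₁, a₂` (either equal, or with no common upper bound)
together with compatible points above them.  It generates a coherent thread on
`↓a₁ ∪ ↓a₂`. -/
structure PState {I : Type*} [PartialOrder I] (L : DistribAlmostLattice I)
    (X : I → Type*) (p : ∀ i j : I, i ≤ j → X j → X i) where
  a₁ : I
  a₂ : I
  x₁ : X a₁
  x₂ : X a₂
  coh : p (L.meet a₁ a₂) a₁ (L.meet_le_left a₁ a₂) x₁ =
    p (L.meet a₁ a₂) a₂ (L.meet_le_right a₁ a₂) x₂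
  good : (∃ u, a₁ ≤ u ∧ a₂ ≤ u) → a₁ = a₂

section States

variable {I : Type*} [PartialOrder I] {L : DistribAlmostLattice I}
  {X : I → Type*} {p : ∀ i j : I, i ≤ j → X j → X i}
  [∀ i, Nonempty (X i)]

/-- The down-set domain of a state. -/
def PState.mem (S : PState L X p) (d : I) : Prop := d ≤ S.a₁ ∨ d ≤ S.a₂

open Classical in
/-- The thread generated by a state. -/
noncomputable def PState.val (S : PState L X p) (d : I) : X d :=
  if h : d ≤ S.a₁ then p d S.a₁ h S.x₁
  else if h2 : d ≤ S.a₂ then p d S.a₂ h2 S.x₂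
  else Classical.arbitrary (X d)

variable (hcomp : ∀ i j k : I, ∀ hij : i ≤ j, ∀ hjk : j ≤ k, ∀ x : X k,
      p i j hij (p j k hjk x) = p i k (hij.trans hjk) x)

theorem PState.val_eq₁ (S : PState L X p) {d : I} (h : d ≤ S.a₁) :
    S.val d = p d S.a₁ h S.x₁ := by
  unfold PState.val; rw [dif_pos h]

include hcomp in
theorem PState.val_eq₂ (S : PState L X p) {d : I} (h : d ≤ S.a₂) :
    S.val d = p d S.a₂ h S.x₂ := by
  by_cases h1 : d ≤ S.a₁
  · rw [S.val_eq₁ h1]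
    have hm : d ≤ L.meet S.a₁ S.a₂ := le_meet L h1 h
    calc p d S.a₁ h1 S.x₁
        = p d (L.meet S.a₁ S.a₂) hm (p (L.meet S.a₁ S.a₂) S.a₁ (L.meet_le_left _ _) S.x₁) :=
          (hcomp _ _ _ hm (L.meet_le_left _ _) S.x₁).symm
      _ = p d (L.meet S.a₁ S.a₂) hm (p (L.meet S.a₁ S.a₂) S.a₂ (L.meet_le_right _ _) S.x₂) := by
          rw [S.coh]
      _ = p d S.a₂ h S.x₂ := hcomp _ _ _ hm (L.meet_le_right _ _) S.x₂
  · unfold PState.val; rw [dif_neg h1, dif_pos h]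

include hcomp in
theorem PState.val_thread (S : PState L X p) {k d : I} (hkd : k ≤ d) (hd : S.mem d) :
    p k d hkd (S.val d) = S.val k := by
  rcases hd with h | h
  · rw [S.val_eq₁ h, S.val_eq₁ (hkd.trans h)]
    exact hcomp _ _ _ hkd h S.x₁
  · rw [S.val_eq₂ hcomp h, S.val_eq₂ hcomp (hkd.trans h)]
    exact hcomp _ _ _ hkd h S.x₂

/-- `S'` extends `S`: the domain grows and the generated threads agree. -/
def Extends (S' S : PState L X p) : Prop :=
  ∀ d, S.mem d → S'.mem d ∧ S'.val d = S.val d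

theorem Extends.refl (S : PState L X p) : Extends S S := fun _ hd => ⟨hd, rfl⟩

theorem Extends.trans {S₃ S₂ S₁ : PState L X p} (h32 : Extends S₃ S₂) (h21 : Extends S₂ S₁) :
    Extends S₃ S₁ := fun d hd =>
  ⟨(h32 d (h21 d hd).1).1, ((h32 d (h21 d hd).1).2).trans (h21 d hd).2⟩

/-- Swap the two peaks of a state. -/
def PState.swap (S : PState L X p) : PState L X p where
  a₁ := S.a₂
  a₂ := S.a₁
  x₁ := S.x₂
  x₂ := S.x₁
  coh := by
    have key : ∀ (w : I), w = L.meet S.a₁ S.a₂ → ∀ (h1 : w ≤ S.a₂) (h2 : w ≤ S.a₁),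
        p w S.a₂ h1 S.x₂ = p w S.a₁ h2 S.x₁ := by
      rintro w rfl h1 h2; exact S.coh.symm
    exact key _ (meet_comm L S.a₂ S.a₁) _ _
  good := fun ⟨u, h1, h2⟩ => (S.good ⟨u, h2, h1⟩).symm

theorem PState.mem_swap (S : PState L X p) {d : I} (h : S.mem d) : S.swap.mem d := h.symm

include hcomp in
theorem PState.val_swap (S : PState L X p) (d : I) : S.swap.val d = S.val d := by
  classical
  by_cases h1 : d ≤ S.a₁
  · rw [S.val_eq₁ h1]
    exact S.swap.val_eq₂ hcomp h1
  · by_cases h2 : d ≤ S.a₂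
    · rw [S.val_eq₂ hcomp h2]
      exact S.swap.val_eq₁ h2
    · show (if h : d ≤ S.a₂ then _ else if _ : d ≤ S.a₁ then _ else _) =
        (if _ : d ≤ S.a₁ then _ else if _ : d ≤ S.a₂ then _ else _)
      rw [dif_neg h1, dif_neg h2, dif_neg h2, dif_neg h1]

variable (hsurj : ∀ i j : I, ∀ hij : i ≤ j, Function.Surjective (p i j hij))
  (hcor : ∀ i j : I, ∀ hub : ∃ u, i ≤ u ∧ j ≤ u, ∀ xi : X i, ∀ xj : X j,
      p (L.meet i j) i (L.meet_le_left i j) xi =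
        p (L.meet i j) j (L.meet_le_right i j) xj →
      ∃ z : X (L.join i j),
        p i (L.join i j) (L.le_join_left i j hub) z = xi ∧
        p j (L.join i j) (L.le_join_right i j hub) z = xj)

include hcomp hsurj hcor in
/-- The key extension step when `j` and the first peak have a common upper bound. -/
theorem stepA (S : PState L X p) (j : I) (hub₁ : ∃ u, j ≤ u ∧ S.a₁ ≤ u) :
    ∃ S' : PState L X p, Extends S' S ∧ S'.mem j := by
  have hjT : j ≤ L.join j S.a₁ := L.le_join_left _ _ hub₁
  have haT : S.a₁ ≤ L.join j S.a₁ := L.le_join_right _ _ hub₁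
  set T := L.join j S.a₁ with hTdef
  by_cases hdeg : ∃ u, S.a₁ ≤ u ∧ S.a₂ ≤ u
  · -- degenerate case : one peak
    have ha : S.a₁ = S.a₂ := S.good hdeg
    obtain ⟨z, hz⟩ := hsurj S.a₁ T haT S.x₁
    set S' : PState L X p := ⟨T, T, z, z, rfl, fun _ => rfl⟩ with hS'
    refine ⟨S', ?_, Or.inl hjT⟩
    intro d hd
    have hd1 : d ≤ S.a₁ := by
      rcases hd with h | h
      · exact h
      · exact h.trans ha.ge
    refine ⟨Or.inl (hd1.trans haT), ?_⟩
    rw [S'.val_eq₁ (show d ≤ S'.a₁ from hd1.trans haT), S.val_eq₁ hd1, ← hz]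
    exact (hcomp d S.a₁ T hd1 haT z).symm
  · -- genuine two-peak case
    have hT : T = L.join S.a₁ (L.meet S.a₂ T) := vT L hdeg haT
    set e := L.meet S.a₂ T with hedef
    have hea₂ : e ≤ S.a₂ := L.meet_le_left _ _
    have heT : e ≤ T := L.meet_le_right _ _
    have hub' : ∃ u, S.a₁ ≤ u ∧ e ≤ u := ⟨T, haT, heT⟩
    have hme : L.meet S.a₁ e = L.meet S.a₁ S.a₂ := meet_absorb L haT
    set v := p e S.a₂ hea₂ S.x₂ with hv
    have hcompat : p (L.meet S.a₁ e) S.a₁ (L.meet_le_left S.a₁ e) S.x₁ =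
        p (L.meet S.a₁ e) e (L.meet_le_right S.a₁ e) v := by
      have key : ∀ (w : I), w = L.meet S.a₁ S.a₂ → ∀ (h1 : w ≤ S.a₁) (h2 : w ≤ e),
          p w S.a₁ h1 S.x₁ = p w e h2 v := by
        rintro w rfl h1 h2
        calc p (L.meet S.a₁ S.a₂) S.a₁ h1 S.x₁
            = p (L.meet S.a₁ S.a₂) S.a₂ (L.meet_le_right _ _) S.x₂ := S.coh
          _ = p (L.meet S.a₁ S.a₂) e h2 (p e S.a₂ hea₂ S.x₂) :=
              (hcomp _ _ _ h2 hea₂ S.x₂).symm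
      have h1' : L.meet S.a₁ e ≤ S.a₁ := L.meet_le_left _ _
      have h2' : L.meet S.a₁ e ≤ e := L.meet_le_right _ _
      exact key _ hme h1' h2'
    obtain ⟨z, hz₁, hze⟩ := hcor S.a₁ e hub' S.x₁ v hcompat
    have ha₁T₂ : S.a₁ ≤ L.join S.a₁ e := L.le_join_left _ _ hub'
    have heT₂ : e ≤ L.join S.a₁ e := L.le_join_right _ _ hub'
    have hjT₂ : j ≤ L.join S.a₁ e := hT ▸ hjT
    have hnub' : ¬∃ u, L.join S.a₁ e ≤ u ∧ S.a₂ ≤ u := fun ⟨u, h1, h2⟩ =>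
      hdeg ⟨u, ha₁T₂.trans h1, h2⟩
    have hmeet : L.meet (L.join S.a₁ e) S.a₂ = e := by
      rw [meet_comm L (L.join S.a₁ e) S.a₂, ← hT]
    have hcoh' : p (L.meet (L.join S.a₁ e) S.a₂) (L.join S.a₁ e)
          (L.meet_le_left _ _) z =
        p (L.meet (L.join S.a₁ e) S.a₂) S.a₂ (L.meet_le_right _ _) S.x₂ := by
      have key : ∀ (w : I), w = e → ∀ (h1 : w ≤ L.join S.a₁ e) (h2 : w ≤ S.a₂),
          p w (L.join S.a₁ e) h1 z = p w S.a₂ h2 S.x₂ := by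
        rintro w rfl h1 h2; exact hze
      exact key _ hmeet _ _
    set S' : PState L X p := ⟨L.join S.a₁ e, S.a₂, z, S.x₂, hcoh', fun h => absurd h hnub'⟩
      with hS'
    refine ⟨S', ?_, Or.inl hjT₂⟩
    intro d hd
    rcases hd with h | h
    · refine ⟨Or.inl (h.trans ha₁T₂), ?_⟩
      rw [S'.val_eq₁ (show d ≤ S'.a₁ from h.trans ha₁T₂), S.val_eq₁ h, ← hz₁]
      exact (hcomp d S.a₁ (L.join S.a₁ e) h ha₁T₂ z).symm
    · refine ⟨Or.inr h, ?_⟩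
      rw [S'.val_eq₂ hcomp (show d ≤ S'.a₂ from h), S.val_eq₂ hcomp h]

include hcomp hsurj hcor in
/-- Any state can be extended so that its domain contains a given index. -/
theorem step (S : PState L X p) (j : I) :
    ∃ S' : PState L X p, Extends S' S ∧ S'.mem j := by
  by_cases hub₁ : ∃ u, j ≤ u ∧ S.a₁ ≤ u
  · exact stepA hcomp hsurj hcor S j hub₁
  by_cases hub₂ : ∃ u, j ≤ u ∧ S.a₂ ≤ u
  · obtain ⟨S', hext, hmem⟩ := stepA hcomp hsurj hcor S.swap j hub₂
    refine ⟨S', ?_, hmem⟩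
    intro d hd
    obtain ⟨hm, hv⟩ := hext d (S.mem_swap hd)
    exact ⟨hm, hv.trans (S.val_swap hcomp d)⟩
  · rcases L.two_of_three j S.a₁ S.a₂ with h | h | h
    · exact absurd h hub₁
    · exact absurd h hub₂
    · have ha : S.a₁ = S.a₂ := S.good h
      obtain ⟨w, hw⟩ := hsurj (L.meet j S.a₁) j (L.meet_le_left _ _)
        (p (L.meet j S.a₁) S.a₁ (L.meet_le_right _ _) S.x₁)
      set S' : PState L X p := ⟨j, S.a₁, w, S.x₁, hw, fun h' => absurd h' hub₁⟩ with hS'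
      refine ⟨S', ?_, Or.inl le_rfl⟩
      intro d hd
      have hd1 : d ≤ S.a₁ := by
        rcases hd with h' | h'
        · exact h'
        · exact h'.trans ha.ge
      refine ⟨Or.inr hd1, ?_⟩
      rw [S'.val_eq₂ hcomp (show d ≤ S'.a₂ from hd1), S.val_eq₁ hd1]

include hcomp hsurj hcor in
theorem cover (S : PState L X p) (K : Finset I) :
    ∃ S' : PState L X p, Extends S' S ∧ ∀ k ∈ K, S'.mem k := by
  classical
  induction K using Finset.induction_on with
  | empty => exact ⟨S, Extends.refl S, by simp⟩
  | @insert a K ha ih =>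
    obtain ⟨S', h1, h2⟩ := ih
    obtain ⟨S'', h3, h4⟩ := step hcomp hsurj hcor S' a
    refine ⟨S'', h3.trans h1, ?_⟩
    intro k hk
    rcases Finset.mem_insert.mp hk with rfl | hk
    · exact h4
    · exact (h3 k (h2 k hk)).1

variable [∀ i, TopologicalSpace (X i)] [∀ i, CompactSpace (X i)] [∀ i, T2Space (X i)]
  (hcont : ∀ i j : I, ∀ hij : i ≤ j, Continuous (p i j hij))

include hcomp hsurj hcor hcont in
/-- Any state extends to a global thread. -/
theorem global (S : PState L X p) :
    ∃ x : ∀ i, X i, InXl X p x ∧ ∀ d, S.mem d → x d = S.val d := by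
  classical
  set C : Finset (I × I) → Set (∀ i, X i) := fun t =>
    (⋂ q ∈ t, ⋂ (h : q.1 ≤ q.2), {x | p q.1 q.2 h (x q.2) = x q.1}) ∩
      (⋂ d, ⋂ (_ : S.mem d), {x | x d = S.val d}) with hC
  have hCcl : ∀ t, IsClosed (C t) := by
    intro t
    refine IsClosed.inter ?_ ?_
    · refine isClosed_biInter fun q _ => isClosed_iInter fun h => ?_
      exact isClosed_eq ((hcont _ _ h).comp (continuous_apply q.2)) (continuous_apply q.1)
    · exact isClosed_iInter fun d => isClosed_iInter fun _ =>
        isClosed_eq (continuous_apply d) continuous_const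
  have hCne : ∀ t, (C t).Nonempty := by
    intro t
    obtain ⟨S', hext, hcov⟩ := cover hcomp hsurj hcor S
      (t.image Prod.fst ∪ t.image Prod.snd)
    refine ⟨fun d => if h : S'.mem d then S'.val d else Classical.arbitrary _, ?_, ?_⟩
    · simp only [Set.mem_iInter, Set.mem_setOf_eq]
      intro q hq h
      have hm2 : S'.mem q.2 := hcov _ (Finset.mem_union_right _ (Finset.mem_image_of_mem _ hq))
      have hm1 : S'.mem q.1 := hcov _ (Finset.mem_union_left _ (Finset.mem_image_of_mem _ hq))
      rw [dif_pos hm2, dif_pos hm1]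
      exact S'.val_thread hcomp h hm2
    · simp only [Set.mem_iInter, Set.mem_setOf_eq]
      intro d hd
      obtain ⟨hm, hv⟩ := hext d hd
      rw [dif_pos hm]; exact hv
  have hdir : Directed (· ⊇ ·) C := by
    intro t₁ t₂
    refine ⟨t₁ ∪ t₂, ?_, ?_⟩ <;>
    · intro x hx
      obtain ⟨h1, h2⟩ := hx
      refine ⟨?_, h2⟩
      simp only [Set.mem_iInter, Set.mem_setOf_eq] at h1 ⊢
      intro q hq h
      exact h1 q (by simp [Finset.mem_union, hq]) h
  obtain ⟨x, hx⟩ := IsCompact.nonempty_iInter_of_directed_nonempty_isCompact_isClosed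
    C hdir hCne (fun t => (hCcl t).isCompact) hCcl
  have hx' : ∀ t, x ∈ C t := Set.mem_iInter.mp hx
  refine ⟨x, ?_, ?_⟩
  · intro i j hij
    have := (hx' {(i, j)}).1
    simp only [Set.mem_iInter, Set.mem_setOf_eq] at this
    exact this (i, j) (Finset.mem_singleton_self _) hij
  · intro d hd
    have := (hx' ∅).2
    simp only [Set.mem_iInter, Set.mem_setOf_eq] at this
    exact this d hd

/-- A two-peak skeleton through a given global thread covering a given finite set. -/
theorem peaks (x : ∀ i, X i) (hx : InXl X p x) (i : I) (K : Finset I) :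
    ∃ S : PState L X p, i ≤ S.a₁ ∧ (∀ k ∈ K, S.mem k) ∧
      S.x₁ = x S.a₁ ∧ S.x₂ = x S.a₂ := by
  classical
  induction K using Finset.induction_on with
  | empty => exact ⟨⟨i, i, x i, x i, rfl, fun _ => rfl⟩, le_rfl, by simp, rfl, rfl⟩
  | @insert k K hk ih =>
    obtain ⟨S, hia, hmem, he₁, he₂⟩ := ih
    by_cases hub₁ : ∃ u, k ≤ u ∧ S.a₁ ≤ u
    · by_cases hdeg : ∃ u, S.a₁ ≤ u ∧ S.a₂ ≤ u
      · have ha : S.a₁ = S.a₂ := S.good hdeg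
        refine ⟨⟨L.join k S.a₁, L.join k S.a₁, x _, x _, rfl, fun _ => rfl⟩,
          hia.trans (L.le_join_right _ _ hub₁), ?_, rfl, rfl⟩
        intro k' hk'
        rcases Finset.mem_insert.mp hk' with rfl | hk'
        · exact Or.inl (L.le_join_left _ _ hub₁)
        · rcases hmem k' hk' with h | h
          · exact Or.inl (h.trans (L.le_join_right _ _ hub₁))
          · exact Or.inl ((h.trans ha.ge).trans (L.le_join_right _ _ hub₁))
      · refine ⟨⟨L.join k S.a₁, S.a₂, x _, x _, (hx _ _ _).trans (hx _ _ _).symm,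
          fun ⟨u, h1, h2⟩ => absurd ⟨u, (L.le_join_right _ _ hub₁).trans h1, h2⟩ hdeg⟩,
          hia.trans (L.le_join_right _ _ hub₁), ?_, rfl, rfl⟩
        intro k' hk'
        rcases Finset.mem_insert.mp hk' with rfl | hk'
        · exact Or.inl (L.le_join_left _ _ hub₁)
        · rcases hmem k' hk' with h | h
          · exact Or.inl (h.trans (L.le_join_right _ _ hub₁))
          · exact Or.inr h
    · by_cases hub₂ : ∃ u, k ≤ u ∧ S.a₂ ≤ u
      · have hnub : ¬∃ u, S.a₁ ≤ u ∧ S.a₂ ≤ u := by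
          intro h
          obtain ⟨u, hku, hau⟩ := hub₂
          exact hub₁ ⟨u, hku, (le_of_eq (S.good h)).trans hau⟩
        refine ⟨⟨S.a₁, L.join k S.a₂, x _, x _, (hx _ _ _).trans (hx _ _ _).symm,
          fun ⟨u, h1, h2⟩ => absurd ⟨u, h1, (L.le_join_right _ _ hub₂).trans h2⟩ hnub⟩,
          hia, ?_, rfl, rfl⟩
        intro k' hk'
        rcases Finset.mem_insert.mp hk' with rfl | hk'
        · exact Or.inr (L.le_join_left _ _ hub₂)
        · rcases hmem k' hk' with h | h
          · exact Or.inl h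
          · exact Or.inr (h.trans (L.le_join_right _ _ hub₂))
      · rcases L.two_of_three k S.a₁ S.a₂ with h | h | h
        · exact absurd h hub₁
        · exact absurd h hub₂
        · have ha : S.a₁ = S.a₂ := S.good h
          refine ⟨⟨S.a₁, k, x _, x _, (hx _ _ _).trans (hx _ _ _).symm,
            fun ⟨u, h1, h2⟩ => absurd ⟨u, h2, h1⟩ hub₁⟩, hia, ?_, rfl, rfl⟩
          intro k' hk'
          rcases Finset.mem_insert.mp hk' with rfl | hk'
          · exact Or.inr le_rfl
          · rcases hmem k' hk' with h' | h'
            · exact Or.inl h'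
            · exact Or.inl (h'.trans ha.ge)

end States

end AmalAux

/-- Each projection `p^ℓ_i : X_ℓ → X_i` is an open continuous surjection commuting with
the maps of the system. -/
theorem Xl_proj_open_continuous_surjective
    {I : Type*} [PartialOrder I] (L : DistribAlmostLattice I)
    (X : I → Type*) [∀ i, TopologicalSpace (X i)]
    [∀ i, Nonempty (X i)] [∀ i, CompactSpace (X i)] [∀ i, T2Space (X i)]
    (p : ∀ i j : I, i ≤ j → X j → X i)
    (hcont : ∀ i j : I, ∀ hij : i ≤ j, Continuous (p i j hij))
    (hopen : ∀ i j : I, ∀ hij : i ≤ j, IsOpenMap (p i j hij))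
    (hsurj : ∀ i j : I, ∀ hij : i ≤ j, Function.Surjective (p i j hij))
    (hid : ∀ i : I, ∀ hii : i ≤ i, ∀ x : X i, p i i hii x = x)
    (hcomp : ∀ i j k : I, ∀ hij : i ≤ j, ∀ hjk : j ≤ k, ∀ x : X k,
      p i j hij (p j k hjk x) = p i k (hij.trans hjk) x)
    (hcor : ∀ i j : I, ∀ hub : ∃ u, i ≤ u ∧ j ≤ u, ∀ xi : X i, ∀ xj : X j,
      p (L.meet i j) i (L.meet_le_left i j) xi =
        p (L.meet i j) j (L.meet_le_right i j) xj →
      ∃ z : X (L.join i j),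
        p i (L.join i j) (L.le_join_left i j hub) z = xi ∧
        p j (L.join i j) (L.le_join_right i j hub) z = xj) :
    ∀ i : I,
      IsOpenMap (fun x : {x : ∀ i, X i // InXl X p x} => x.1 i) ∧
      Continuous (fun x : {x : ∀ i, X i // InXl X p x} => x.1 i) ∧
      Function.Surjective (fun x : {x : ∀ i, X i // InXl X p x} => x.1 i) ∧
      (∀ j : I, ∀ hij : i ≤ j, ∀ x : {x : ∀ i, X i // InXl X p x},
        p i j hij (x.1 j) = x.1 i) := by
  classical
  intro i
  refine ⟨?_, (continuous_apply i).comp continuous_subtype_val, ?_,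
    fun j hij x => x.2 i j hij⟩
  · -- open map
    intro O hO
    rw [isOpen_iff_forall_mem_open]
    rintro b ⟨x, hxO, rfl⟩
    obtain ⟨W, hWopen, hWeq⟩ := isOpen_induced_iff.mp hO
    have hxW : x.1 ∈ W := by rw [← hWeq] at hxO; exact hxO
    obtain ⟨J, u, hu, hJW⟩ := isOpen_pi_iff.mp hWopen x.1 hxW
    obtain ⟨S, hia₁, hmem, he₁, he₂⟩ := AmalAux.peaks (L := L) (p := p) x.1 x.2 i J
    have hW₁o : IsOpen (⋂ j ∈ J, ⋂ (h : j ≤ S.a₁), p j S.a₁ h ⁻¹' u j) :=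
      isOpen_biInter_finset fun j hj => isOpen_iInter_of_finite fun h =>
        (hu j hj).1.preimage (hcont _ _ h)
    have hW₂o : IsOpen (⋂ j ∈ J, ⋂ (h : j ≤ S.a₂), p j S.a₂ h ⁻¹' u j) :=
      isOpen_biInter_finset fun j hj => isOpen_iInter_of_finite fun h =>
        (hu j hj).1.preimage (hcont _ _ h)
    have hxW₁ : x.1 S.a₁ ∈ ⋂ j ∈ J, ⋂ (h : j ≤ S.a₁), p j S.a₁ h ⁻¹' u j := by
      refine Set.mem_iInter₂.mpr fun j hj => Set.mem_iInter.mpr fun h => ?_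
      show p j S.a₁ h (x.1 S.a₁) ∈ u j
      rw [x.2 j S.a₁ h]; exact (hu j hj).2
    have hxW₂ : x.1 S.a₂ ∈ ⋂ j ∈ J, ⋂ (h : j ≤ S.a₂), p j S.a₂ h ⁻¹' u j := by
      refine Set.mem_iInter₂.mpr fun j hj => Set.mem_iInter.mpr fun h => ?_
      show p j S.a₂ h (x.1 S.a₂) ∈ u j
      rw [x.2 j S.a₂ h]; exact (hu j hj).2
    have hmle₁ : L.meet S.a₁ S.a₂ ≤ S.a₁ := L.meet_le_left _ _
    have hmle₂ : L.meet S.a₁ S.a₂ ≤ S.a₂ := L.meet_le_right _ _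
    have hO₂o : IsOpen (p (L.meet S.a₁ S.a₂) S.a₂ hmle₂ ''
        (⋂ j ∈ J, ⋂ (h : j ≤ S.a₂), p j S.a₂ h ⁻¹' u j)) :=
      hopen _ _ _ _ hW₂o
    have hW₁'o : IsOpen ((⋂ j ∈ J, ⋂ (h : j ≤ S.a₁), p j S.a₁ h ⁻¹' u j) ∩
        p (L.meet S.a₁ S.a₂) S.a₁ hmle₁ ⁻¹' (p (L.meet S.a₁ S.a₂) S.a₂ hmle₂ ''
          (⋂ j ∈ J, ⋂ (h : j ≤ S.a₂), p j S.a₂ h ⁻¹' u j))) :=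
      hW₁o.inter (hO₂o.preimage (hcont _ _ _))
    have hxW₁' : x.1 S.a₁ ∈ (⋂ j ∈ J, ⋂ (h : j ≤ S.a₁), p j S.a₁ h ⁻¹' u j) ∩
        p (L.meet S.a₁ S.a₂) S.a₁ hmle₁ ⁻¹' (p (L.meet S.a₁ S.a₂) S.a₂ hmle₂ ''
          (⋂ j ∈ J, ⋂ (h : j ≤ S.a₂), p j S.a₂ h ⁻¹' u j)) := by
      refine ⟨hxW₁, ⟨x.1 S.a₂, hxW₂, ?_⟩⟩
      rw [x.2 _ S.a₂ hmle₂, x.2 _ S.a₁ hmle₁]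
    refine ⟨p i S.a₁ hia₁ '' _, ?_, hopen _ _ _ _ hW₁'o, ⟨x.1 S.a₁, hxW₁', x.2 i S.a₁ hia₁⟩⟩
    rintro v ⟨w₁, ⟨hw₁W, hw₁O⟩, rfl⟩
    obtain ⟨w₂, hw₂W, hw₂eq⟩ := hw₁O
    let Sv : AmalAux.PState L X p := ⟨S.a₁, S.a₂, w₁, w₂, hw₂eq.symm, S.good⟩
    obtain ⟨z, hzXl, hzval⟩ := AmalAux.global hcomp hsurj hcor hcont Sv
    have hzj : ∀ j ∈ J, z j ∈ u j := by
      intro j hj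
      have hjm : Sv.mem j := hmem j hj
      rw [hzval j hjm]
      by_cases h1 : j ≤ S.a₁
      · rw [AmalAux.PState.val_eq₁ Sv (show j ≤ Sv.a₁ from h1)]
        exact Set.mem_iInter.mp (Set.mem_iInter₂.mp hw₁W j hj) h1
      · rcases hjm with h | h
        · exact absurd h h1
        · rw [AmalAux.PState.val_eq₂ hcomp Sv (show j ≤ Sv.a₂ from h)]
          exact Set.mem_iInter.mp (Set.mem_iInter₂.mp hw₂W j hj) h
    have hzW : z ∈ W := hJW fun j hj => hzj j hj
    refine ⟨⟨z, hzXl⟩, ?_, ?_⟩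
    · rw [← hWeq]; exact hzW
    · show z i = p i S.a₁ hia₁ w₁
      rw [hzval i (Or.inl hia₁), AmalAux.PState.val_eq₁ Sv (show i ≤ Sv.a₁ from hia₁)]
  · -- surjective
    intro xi
    let S0 : AmalAux.PState L X p := ⟨i, i, xi, xi, rfl, fun _ => rfl⟩
    obtain ⟨z, hzXl, hzval⟩ := AmalAux.global hcomp hsurj hcor hcont S0
    refine ⟨⟨z, hzXl⟩, ?_⟩
    show z i = xi
    rw [hzval i (Or.inl le_rfl), AmalAux.PState.val_eq₁ S0 (show i ≤ S0.a₁ from le_rfl)]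
    exact hid i le_rfl xi
end

section
/- (Topological amalgamated limit, existence form.) Let I be a distributive almost-lattice, let (X_i : i ∈ I) be nonempty compact Hausdorff spaces, and for i ≤ j let p^j_i : X_j → X_i be continuous open surjections such that p^k_i = p^j_i ∘ p^k_j for i ≤ j ≤ k (commutativity) and such that whenever i ∨ j exists and x_i ∈ X_i, x_j ∈ X_j satisfy p^i_{i∧j}(x_i) = p^j_{i∧j}(x_j), there is z ∈ X_{i∨j} with p^{i∨j}_i(z) = x_i and p^{i∨j}_j(z) = x_j (correctness). Then there exist a compact Hausdorff topological space X and continuous open surjections q_i : X → X_i for i ∈ I such that q_i = p^j_i ∘ q_j for all i ≤ j (commutativity), and such that for all i, j ∈ I and all x_i ∈ X_i, x_j ∈ X_j with p^i_{i∧j}(x_i) = p^j_{i∧j}(x_j) there is x ∈ X with q_i(x) = x_i and q_j(x) = x_j (correctness). -/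
/-! ### Auxiliary development for the amalgamated limit -/

namespace AmalgAux

universe w₁ w₂

variable {I : Type w₁} [PartialOrder I]

theorem le_meet (L : DistribAlmostLattice I) {i j m : I} (h₁ : m ≤ i) (h₂ : m ≤ j) :
    m ≤ L.meet i j := by
  refine (L.meet_isGLB i j).2 ?_
  rintro x hx
  rcases Set.mem_insert_iff.mp hx with rfl | hx
  · exact h₁
  · rcases Set.mem_singleton_iff.mp hx with rfl
    exact h₂

theorem join_le (L : DistribAlmostLattice I) {i j k : I} (hub : ∃ u, i ≤ u ∧ j ≤ u)
    (h₁ : i ≤ k) (h₂ : j ≤ k) : L.join i j ≤ k := by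
  refine (L.join_isLUB i j hub).2 ?_
  rintro x hx
  rcases Set.mem_insert_iff.mp hx with rfl | hx
  · exact h₁
  · rcases Set.mem_singleton_iff.mp hx with rfl
    exact h₂

/-- Axiom (iii) gives a cover of any finite list by two elements. -/
theorem cover (L : DistribAlmostLattice I) (a : I) (l : List I) :
    ∃ k₁ k₂ : I, ∀ i ∈ a :: l, i ≤ k₁ ∨ i ≤ k₂ := by
  induction l with
  | nil =>
      refine ⟨a, a, ?_⟩
      intro i hi
      rcases List.mem_singleton.mp hi with rfl
      exact Or.inl le_rfl
  | cons b t ih =>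
      obtain ⟨k₁, k₂, hk⟩ := ih
      have mem' : ∀ i, i ∈ a :: b :: t → i = b ∨ i ∈ a :: t := by
        intro i hi
        rcases List.mem_cons.mp hi with rfl | hi
        · exact Or.inr (List.mem_cons_self)
        · rcases List.mem_cons.mp hi with rfl | hi
          · exact Or.inl rfl
          · exact Or.inr (List.mem_cons_of_mem _ hi)
      rcases L.two_of_three b k₁ k₂ with ⟨u, hbu, h1u⟩ | ⟨u, hbu, h2u⟩ | ⟨u, h1u, h2u⟩
      · refine ⟨u, k₂, ?_⟩
        intro i hi
        rcases mem' i hi with rfl | hi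
        · exact Or.inl hbu
        · rcases hk i hi with h | h
          · exact Or.inl (h.trans h1u)
          · exact Or.inr h
      · refine ⟨k₁, u, ?_⟩
        intro i hi
        rcases mem' i hi with rfl | hi
        · exact Or.inr hbu
        · rcases hk i hi with h | h
          · exact Or.inl h
          · exact Or.inr (h.trans h2u)
      · refine ⟨u, b, ?_⟩
        intro i hi
        rcases mem' i hi with rfl | hi
        · exact Or.inr le_rfl
        · rcases hk i hi with h | h
          · exact Or.inl (h.trans h1u)
          · exact Or.inl (h.trans h2u)

variable {X : I → Type w₂}

/-- Coherence of two points: agreement at every common lower bound. -/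
def Coh (p : ∀ i j : I, i ≤ j → X j → X i) (i : I) (xi : X i) (j : I) (xj : X j) : Prop :=
  ∀ m (h₁ : m ≤ i) (h₂ : m ≤ j), p m i h₁ xi = p m j h₂ xj

section System

variable {p : ∀ i j : I, i ≤ j → X j → X i}
variable (hsurj : ∀ i j : I, ∀ hij : i ≤ j, Function.Surjective (p i j hij))
variable (hcomp : ∀ i j k : I, ∀ hij : i ≤ j, ∀ hjk : j ≤ k, ∀ x : X k,
      p i j hij (p j k hjk x) = p i k (hij.trans hjk) x)

include hsurj hcomp in
theorem p_id (i : I) (h : i ≤ i) (x : X i) : p i i h x = x := by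
  obtain ⟨w, rfl⟩ := hsurj i i h x
  exact hcomp i i i h h w

theorem coh_refl (i : I) (x : X i) : Coh p i x i x := fun _ _ _ => rfl

theorem coh_symm {i j : I} {xi : X i} {xj : X j} (h : Coh p i xi j xj) : Coh p j xj i xi :=
  fun m h₁ h₂ => (h m h₂ h₁).symm

include hcomp in
theorem coh_proj {i j : I} {xi : X i} {xj : X j} (h : Coh p i xi j xj)
    {s t : I} (hs : s ≤ i) (ht : t ≤ j) :
    Coh p s (p s i hs xi) t (p t j ht xj) := by
  intro m h₁ h₂
  rw [hcomp m s i h₁ hs xi, hcomp m t j h₂ ht xj]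
  exact h m _ _

include hcomp in
theorem coh_projR {i j : I} {xi : X i} {xj : X j} (h : Coh p i xi j xj)
    {t : I} (ht : t ≤ j) : Coh p i xi t (p t j ht xj) := by
  intro m h₁ h₂
  rw [hcomp m t j h₂ ht xj]
  exact h m _ _

include hsurj hcomp in
theorem thread_proj {f : ∀ i, X i} (hf : ∀ a b, Coh p a (f a) b (f b))
    {s t : I} (h : s ≤ t) : p s t h (f t) = f s := by
  have := hf s t s le_rfl h
  rw [p_id hsurj hcomp] at this
  exact this.symm

variable (L : DistribAlmostLattice I)
variable (hcor : ∀ i j : I, ∀ hub : ∃ u, i ≤ u ∧ j ≤ u, ∀ xi : X i, ∀ xj : X j,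
      p (L.meet i j) i (L.meet_le_left i j) xi =
        p (L.meet i j) j (L.meet_le_right i j) xj →
      ∃ z : X (L.join i j),
        p i (L.join i j) (L.le_join_left i j hub) z = xi ∧
        p j (L.join i j) (L.le_join_right i j hub) z = xj)

include hcomp L in
theorem coh_of_meet {i j : I} {xi : X i} {xj : X j}
    (h : p (L.meet i j) i (L.meet_le_left i j) xi =
        p (L.meet i j) j (L.meet_le_right i j) xj) : Coh p i xi j xj := by
  intro m h₁ h₂
  have hm : m ≤ L.meet i j := le_meet L h₁ h₂
  rw [← hcomp m (L.meet i j) i hm (L.meet_le_left i j) xi, h,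
    hcomp m (L.meet i j) j hm (L.meet_le_right i j) xj]

include hsurj hcomp hcor in
theorem amalgLift {i j k : I} (hik : i ≤ k) (hjk : j ≤ k) {xi : X i} {xj : X j}
    (hc : Coh p i xi j xj) :
    ∃ Z : X k, p i k hik Z = xi ∧ p j k hjk Z = xj := by
  have hub : ∃ u, i ≤ u ∧ j ≤ u := ⟨k, hik, hjk⟩
  obtain ⟨z, hz1, hz2⟩ := hcor i j hub xi xj (hc _ _ _)
  obtain ⟨Z, hZ⟩ := hsurj (L.join i j) k (join_le L hub hik hjk) z
  refine ⟨Z, ?_, ?_⟩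
  · have e := hcomp i (L.join i j) k (L.le_join_left i j hub) (join_le L hub hik hjk) Z
    rw [hZ, hz1] at e
    exact e.symm
  · have e := hcomp j (L.join i j) k (L.le_join_right i j hub) (join_le L hub hik hjk) Z
    rw [hZ, hz2] at e
    exact e.symm

include hsurj hcomp L in
theorem glue (k₁ k₂ : I) (Z₁ : X k₁) :
    ∃ Z₂ : X k₂, Coh p k₁ Z₁ k₂ Z₂ := by
  obtain ⟨Z₂, hZ₂⟩ := hsurj (L.meet k₁ k₂) k₂ (L.meet_le_right k₁ k₂)
    (p (L.meet k₁ k₂) k₁ (L.meet_le_left k₁ k₂) Z₁)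
  refine ⟨Z₂, ?_⟩
  intro m h₁ h₂
  have hm : m ≤ L.meet k₁ k₂ := le_meet L h₁ h₂
  rw [← hcomp m (L.meet k₁ k₂) k₂ hm (L.meet_le_right k₁ k₂) Z₂, hZ₂,
    hcomp m (L.meet k₁ k₂) k₁ hm (L.meet_le_left k₁ k₂) Z₁]

include hsurj hcomp hcor in
theorem MCL {k₁ k₂ i₀ j₀ : I} {x₀ : X i₀} {y₀ : X j₀}
    (hi : i₀ ≤ k₁) (hj : j₀ ≤ k₂) (hc : Coh p i₀ x₀ j₀ y₀) :
    ∃ (Z₁ : X k₁) (Z₂ : X k₂), Coh p k₁ Z₁ k₂ Z₂ ∧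
      p i₀ k₁ hi Z₁ = x₀ ∧ p j₀ k₂ hj Z₂ = y₀ ∧
      (∀ h : j₀ ≤ k₁, p j₀ k₁ h Z₁ = y₀) := by
  -- Step 1 : a witness over k₁ through x₀ and the k₁-part of y₀
  set b := L.meet j₀ k₁ with hb
  have hcb : Coh p i₀ x₀ b (p b j₀ (L.meet_le_left j₀ k₁) y₀) :=
    coh_projR hcomp hc (L.meet_le_left j₀ k₁)
  obtain ⟨Z₁, hZ₁i, hZ₁b⟩ :=
    amalgLift hsurj hcomp L hcor hi (L.meet_le_right j₀ k₁) hcb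
  -- Step 2 : a witness over k₂ through y₀ agreeing with Z₁ at the meet
  set c := L.meet k₁ k₂ with hcdef
  have hcc : Coh p j₀ y₀ c (p c k₁ (L.meet_le_left k₁ k₂) Z₁) := by
    intro m h₁ h₂
    have hmk₁ : m ≤ k₁ := h₂.trans (L.meet_le_left k₁ k₂)
    have hmb : m ≤ b := le_meet L h₁ hmk₁
    rw [hcomp m c k₁ h₂ (L.meet_le_left k₁ k₂) Z₁,
      ← hcomp m b k₁ hmb (L.meet_le_right j₀ k₁) Z₁, hZ₁b,
      hcomp m b j₀ hmb (L.meet_le_left j₀ k₁) y₀]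
  obtain ⟨Z₂, hZ₂j, hZ₂c⟩ :=
    amalgLift hsurj hcomp L hcor hj (L.meet_le_right k₁ k₂) hcc
  refine ⟨Z₁, Z₂, ?_, hZ₁i, hZ₂j, ?_⟩
  · intro m h₁ h₂
    have hmc : m ≤ c := le_meet L h₁ h₂
    rw [← hcomp m c k₂ hmc (L.meet_le_right k₁ k₂) Z₂, hZ₂c,
      hcomp m c k₁ hmc (L.meet_le_left k₁ k₂) Z₁]
  · intro h
    have hjb : j₀ ≤ b := le_meet L le_rfl h
    rw [← hcomp j₀ b k₁ hjb (L.meet_le_right j₀ k₁) Z₁, hZ₁b,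
      hcomp j₀ b j₀ hjb (L.meet_le_left j₀ k₁) y₀, p_id hsurj hcomp]

include hsurj hcomp hcor in
theorem WPK {k₁ k₂ i₀ j₀ : I} {x₀ : X i₀} {y₀ : X j₀}
    (hi : i₀ ≤ k₁ ∨ i₀ ≤ k₂) (hj : j₀ ≤ k₁ ∨ j₀ ≤ k₂) (hc : Coh p i₀ x₀ j₀ y₀) :
    ∃ (Z₁ : X k₁) (Z₂ : X k₂), Coh p k₁ Z₁ k₂ Z₂ ∧
      (∀ h : i₀ ≤ k₁, p i₀ k₁ h Z₁ = x₀) ∧ (∀ h : i₀ ≤ k₂, p i₀ k₂ h Z₂ = x₀) ∧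
      (∀ h : j₀ ≤ k₁, p j₀ k₁ h Z₁ = y₀) ∧ (∀ h : j₀ ≤ k₂, p j₀ k₂ h Z₂ = y₀) := by
  rcases hi with hi1 | hi2 <;> rcases hj with hj1 | hj2
  · -- both anchors below k₁
    obtain ⟨Z₁, hx, hy⟩ := amalgLift hsurj hcomp L hcor hi1 hj1 hc
    obtain ⟨Z₂, hZ⟩ := glue hsurj hcomp L k₁ k₂ Z₁
    exact ⟨Z₁, Z₂, hZ,
      fun h => hx,
      fun h => (hZ i₀ hi1 h).symm.trans hx,
      fun h => hy,
      fun h => (hZ j₀ hj1 h).symm.trans hy⟩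
  · -- i₀ ≤ k₁, j₀ ≤ k₂
    obtain ⟨Z₁, Z₂, hZ, hx, hy, hcond⟩ := MCL hsurj hcomp L hcor hi1 hj2 hc
    exact ⟨Z₁, Z₂, hZ,
      fun h => hx,
      fun h => (hZ i₀ hi1 h).symm.trans hx,
      hcond,
      fun h => hy⟩
  · -- i₀ ≤ k₂, j₀ ≤ k₁ : apply MCL with anchors swapped
    obtain ⟨Z₁, Z₂, hZ, hy, hx, hcond⟩ :=
      MCL hsurj hcomp L hcor (x₀ := y₀) (y₀ := x₀) hj1 hi2 (coh_symm hc)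
    exact ⟨Z₁, Z₂, hZ,
      hcond,
      fun h => hx,
      fun h => hy,
      fun h => (hZ j₀ hj1 h).symm.trans hy⟩
  · -- both anchors below k₂
    obtain ⟨Z₂, hx, hy⟩ := amalgLift hsurj hcomp L hcor hi2 hj2 hc
    obtain ⟨Z₁, hZ⟩ := glue hsurj hcomp L k₂ k₁ Z₂
    exact ⟨Z₁, Z₂, coh_symm hZ,
      fun h => (hZ i₀ hi2 h).symm.trans hx,
      fun h => hx,
      fun h => (hZ j₀ hj2 h).symm.trans hy,
      fun h => hy⟩

variable [∀ i, Nonempty (X i)]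

include hsurj hcomp hcor in
theorem familyExt {i₀ j₀ : I} {x₀ : X i₀} {y₀ : X j₀} (hc : Coh p i₀ x₀ j₀ y₀)
    (s : Finset I) :
    ∃ f : ∀ i, X i, f i₀ = x₀ ∧ f j₀ = y₀ ∧
      ∀ a ∈ s, ∀ b ∈ s, Coh p a (f a) b (f b) := by
  classical
  obtain ⟨k₁, k₂, hk⟩ := cover L i₀ (j₀ :: s.toList)
  have hi : i₀ ≤ k₁ ∨ i₀ ≤ k₂ := hk i₀ (List.mem_cons_self)
  have hj : j₀ ≤ k₁ ∨ j₀ ≤ k₂ :=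
    hk j₀ (List.mem_cons_of_mem _ (List.mem_cons_self))
  have hmem : ∀ a ∈ s, a ≤ k₁ ∨ a ≤ k₂ := by
    intro a ha
    exact hk a (List.mem_cons_of_mem _ (List.mem_cons_of_mem _
      (Finset.mem_toList.mpr ha)))
  obtain ⟨Z₁, Z₂, hZ, hx1, hx2, hy1, hy2⟩ := WPK hsurj hcomp L hcor hi hj hc
  refine ⟨fun i => if h : i ≤ k₁ then p i k₁ h Z₁ else
    (if h' : i ≤ k₂ then p i k₂ h' Z₂ else Classical.arbitrary _), ?_, ?_, ?_⟩
  · by_cases h : i₀ ≤ k₁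
    · simp only [dif_pos h]
      exact hx1 h
    · have h' : i₀ ≤ k₂ := hi.resolve_left h
      simp only [dif_neg h, dif_pos h']
      exact hx2 h'
  · by_cases h : j₀ ≤ k₁
    · simp only [dif_pos h]
      exact hy1 h
    · have h' : j₀ ≤ k₂ := hj.resolve_left h
      simp only [dif_neg h, dif_pos h']
      exact hy2 h'
  · intro a ha b hb
    by_cases h1 : a ≤ k₁ <;> by_cases h2 : b ≤ k₁
    · simp only [dif_pos h1, dif_pos h2]
      exact coh_proj hcomp (coh_refl k₁ Z₁) h1 h2
    · have h2' : b ≤ k₂ := (hmem b hb).resolve_left h2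
      simp only [dif_pos h1, dif_neg h2, dif_pos h2']
      exact coh_proj hcomp hZ h1 h2'
    · have h1' : a ≤ k₂ := (hmem a ha).resolve_left h1
      simp only [dif_neg h1, dif_pos h1', dif_pos h2]
      exact coh_proj hcomp (coh_symm hZ) h1' h2
    · have h1' : a ≤ k₂ := (hmem a ha).resolve_left h1
      have h2' : b ≤ k₂ := (hmem b hb).resolve_left h2
      simp only [dif_neg h1, dif_neg h2, dif_pos h1', dif_pos h2']
      exact coh_proj hcomp (coh_refl k₂ Z₂) h1' h2'

variable [∀ i, TopologicalSpace (X i)] [∀ i, CompactSpace (X i)] [∀ i, T2Space (X i)]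
variable (hcont : ∀ i j : I, ∀ hij : i ≤ j, Continuous (p i j hij))

include hsurj hcomp hcor hcont in
theorem threadExists {i₀ j₀ : I} {x₀ : X i₀} {y₀ : X j₀} (hc : Coh p i₀ x₀ j₀ y₀) :
    ∃ f : ∀ i, X i, (∀ a b, Coh p a (f a) b (f b)) ∧ f i₀ = x₀ ∧ f j₀ = y₀ := by
  classical
  set K : Finset I → Set (∀ i, X i) := fun s =>
    {f | f i₀ = x₀ ∧ f j₀ = y₀ ∧ ∀ a ∈ s, ∀ b ∈ s, Coh p a (f a) b (f b)} with hK
  have hdir : Directed (fun x1 x2 => x1 ⊇ x2) K := by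
    intro s t
    refine ⟨s ∪ t, ?_, ?_⟩
    · rintro f ⟨h1, h2, h3⟩
      exact ⟨h1, h2, fun a ha b hb =>
        h3 a (Finset.mem_union_left _ ha) b (Finset.mem_union_left _ hb)⟩
    · rintro f ⟨h1, h2, h3⟩
      exact ⟨h1, h2, fun a ha b hb =>
        h3 a (Finset.mem_union_right _ ha) b (Finset.mem_union_right _ hb)⟩
  have hne : ∀ s, (K s).Nonempty := by
    intro s
    obtain ⟨f, h1, h2, h3⟩ := familyExt hsurj hcomp L hcor hc s
    exact ⟨f, h1, h2, h3⟩
  have hcl : ∀ s, IsClosed (K s) := by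
    intro s
    have e : K s = ({f : ∀ i, X i | f i₀ = x₀} ∩ ({f | f j₀ = y₀} ∩
        ⋂ a ∈ (s : Set I), ⋂ b ∈ (s : Set I), ⋂ m, ⋂ (h₁ : m ≤ a), ⋂ (h₂ : m ≤ b),
          {f | p m a h₁ (f a) = p m b h₂ (f b)})) := by
      ext f
      simp only [hK, Set.mem_setOf_eq, Set.mem_inter_iff, Set.mem_iInter, Coh,
        Finset.mem_coe]
      try tauto
    rw [e]
    refine IsClosed.inter (isClosed_eq (continuous_apply i₀) continuous_const) ?_
    refine IsClosed.inter (isClosed_eq (continuous_apply j₀) continuous_const) ?_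
    refine isClosed_biInter fun a _ => isClosed_biInter fun b _ => ?_
    refine isClosed_iInter fun m => isClosed_iInter fun h₁ => isClosed_iInter fun h₂ => ?_
    exact isClosed_eq ((hcont m a h₁).comp (continuous_apply a))
      ((hcont m b h₂).comp (continuous_apply b))
  obtain ⟨f, hf⟩ := IsCompact.nonempty_iInter_of_directed_nonempty_isCompact_isClosed
    K hdir hne (fun s => (hcl s).isCompact) hcl
  have hmem : ∀ s, f ∈ K s := fun s => Set.mem_iInter.mp hf s
  refine ⟨f, ?_, (hmem ∅).1, (hmem ∅).2.1⟩
  intro a b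
  exact (hmem {a, b}).2.2 a (by simp) b (by simp)

end System

end AmalgAux

/-- Topological amalgamated limit, existence form: given a correct commuting system of
nonempty compact Hausdorff spaces with continuous open surjections over a distributive
almost-lattice, there is a compact Hausdorff space mapping onto all of them by continuous
open surjections, commuting with the system and satisfying correctness. -/
theorem topological_amalgamated_limit
    {I : Type u} [PartialOrder I] (L : DistribAlmostLattice I)
    (X : I → Type v) [∀ i, TopologicalSpace (X i)]
    [∀ i, Nonempty (X i)] [∀ i, CompactSpace (X i)] [∀ i, T2Space (X i)]
    (p : ∀ i j : I, i ≤ j → X j → X i)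
    (hcont : ∀ i j : I, ∀ hij : i ≤ j, Continuous (p i j hij))
    (hopen : ∀ i j : I, ∀ hij : i ≤ j, IsOpenMap (p i j hij))
    (hsurj : ∀ i j : I, ∀ hij : i ≤ j, Function.Surjective (p i j hij))
    (hcomp : ∀ i j k : I, ∀ hij : i ≤ j, ∀ hjk : j ≤ k, ∀ x : X k,
      p i j hij (p j k hjk x) = p i k (hij.trans hjk) x)
    (hcor : ∀ i j : I, ∀ hub : ∃ u, i ≤ u ∧ j ≤ u, ∀ xi : X i, ∀ xj : X j,
      p (L.meet i j) i (L.meet_le_left i j) xi =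
        p (L.meet i j) j (L.meet_le_right i j) xj →
      ∃ z : X (L.join i j),
        p i (L.join i j) (L.le_join_left i j hub) z = xi ∧
        p j (L.join i j) (L.le_join_right i j hub) z = xj) :
    ∃ (Y : Type (max u v)) (tY : TopologicalSpace Y),
      @CompactSpace Y tY ∧ @T2Space Y tY ∧
      ∃ q : ∀ i : I, Y → X i,
        (∀ i : I, @Continuous Y (X i) tY inferInstance (q i) ∧
          @IsOpenMap Y (X i) tY inferInstance (q i) ∧
          Function.Surjective (q i)) ∧
        (∀ i j : I, ∀ hij : i ≤ j, ∀ y : Y, p i j hij (q j y) = q i y) ∧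
        (∀ i j : I, ∀ xi : X i, ∀ xj : X j,
          p (L.meet i j) i (L.meet_le_left i j) xi =
            p (L.meet i j) j (L.meet_le_right i j) xj →
          ∃ y : Y, q i y = xi ∧ q j y = xj) := by
  classical
  have hYset : IsClosed {f : ∀ i, X i | ∀ a b, AmalgAux.Coh p a (f a) b (f b)} := by
    have e : {f : ∀ i, X i | ∀ a b, AmalgAux.Coh p a (f a) b (f b)} =
        ⋂ a, ⋂ b, ⋂ m, ⋂ (h₁ : m ≤ a), ⋂ (h₂ : m ≤ b),
          {f : ∀ i, X i | p m a h₁ (f a) = p m b h₂ (f b)} := by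
      ext f
      simp only [Set.mem_setOf_eq, Set.mem_iInter, AmalgAux.Coh]
    rw [e]
    exact isClosed_iInter fun a => isClosed_iInter fun b => isClosed_iInter fun m =>
      isClosed_iInter fun h₁ => isClosed_iInter fun h₂ =>
        isClosed_eq ((hcont m a h₁).comp (continuous_apply a))
          ((hcont m b h₂).comp (continuous_apply b))
  refine ⟨{f : ∀ i, X i // ∀ a b, AmalgAux.Coh p a (f a) b (f b)}, inferInstance,
    isCompact_iff_compactSpace.mp hYset.isCompact, inferInstance,
    fun i y => y.1 i, fun i => ⟨?_, ?_, ?_⟩, ?_, ?_⟩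
  · -- continuity
    exact (continuous_apply i).comp continuous_subtype_val
  · -- openness
    intro U hU
    rw [isOpen_iff_forall_mem_open]
    rintro xi ⟨y, hyU, rfl⟩
    obtain ⟨O, hO, hUO⟩ := isOpen_induced_iff.mp hU
    have hyO : y.1 ∈ O := by rw [← hUO] at hyU; exact hyU
    obtain ⟨F, u, hu, hsub⟩ := isOpen_pi_iff.mp hO y.1 hyO
    obtain ⟨k₁, k₂, hk⟩ := AmalgAux.cover L i F.toList
    have hi : i ≤ k₁ ∨ i ≤ k₂ := hk i (List.mem_cons_self)
    have hmem : ∀ s ∈ F, s ≤ k₁ ∨ s ≤ k₂ := fun s hs =>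
      hk s (List.mem_cons_of_mem _ (Finset.mem_toList.mpr hs))
    have key : ∀ K₁ K₂ : I, i ≤ K₁ → (∀ s ∈ F, s ≤ K₁ ∨ s ≤ K₂) →
        ∃ V : Set (X i), IsOpen V ∧ y.1 i ∈ V ∧
          V ⊆ (fun y : {f : ∀ i, X i // ∀ a b, AmalgAux.Coh p a (f a) b (f b)} =>
            y.1 i) '' U := by
      intro K₁ K₂ hiK hcov
      set c := L.meet K₁ K₂ with hcdef
      set W₂ : Set (X K₂) := ⋂ s ∈ (F : Set I),
        (if h : ¬ s ≤ K₁ ∧ s ≤ K₂ then (p s K₂ h.2) ⁻¹' (u s) else Set.univ) with hW₂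
      have hW₂open : IsOpen W₂ := by
        refine (F.finite_toSet).isOpen_biInter fun s hs => ?_
        by_cases h : ¬ s ≤ K₁ ∧ s ≤ K₂
        · rw [dif_pos h]
          exact (hu s (Finset.mem_coe.mp hs)).1.preimage (hcont s K₂ h.2)
        · rw [dif_neg h]; exact isOpen_univ
      have hyW₂ : y.1 K₂ ∈ W₂ := by
        refine Set.mem_biInter fun s hs => ?_
        by_cases h : ¬ s ≤ K₁ ∧ s ≤ K₂
        · rw [dif_pos h]
          show p s K₂ h.2 (y.1 K₂) ∈ u s
          rw [AmalgAux.thread_proj hsurj hcomp y.2 h.2]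
          exact (hu s (Finset.mem_coe.mp hs)).2
        · rw [dif_neg h]; trivial
      set N := p c K₂ (L.meet_le_right K₁ K₂) '' W₂ with hN
      have hNopen : IsOpen N := hopen c K₂ _ W₂ hW₂open
      set W₁ : Set (X K₁) := (⋂ s ∈ (F : Set I),
        (if h : s ≤ K₁ then (p s K₁ h) ⁻¹' (u s) else Set.univ)) ∩
        (p c K₁ (L.meet_le_left K₁ K₂)) ⁻¹' N with hW₁
      have hW₁open : IsOpen W₁ := by
        refine IsOpen.inter ((F.finite_toSet).isOpen_biInter fun s hs => ?_)
          (hNopen.preimage (hcont c K₁ _))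
        by_cases h : s ≤ K₁
        · rw [dif_pos h]
          exact (hu s (Finset.mem_coe.mp hs)).1.preimage (hcont s K₁ h)
        · rw [dif_neg h]; exact isOpen_univ
      have hyW₁ : y.1 K₁ ∈ W₁ := by
        constructor
        · refine Set.mem_biInter fun s hs => ?_
          by_cases h : s ≤ K₁
          · rw [dif_pos h]
            show p s K₁ h (y.1 K₁) ∈ u s
            rw [AmalgAux.thread_proj hsurj hcomp y.2 h]
            exact (hu s (Finset.mem_coe.mp hs)).2
          · rw [dif_neg h]; trivial
        · show p c K₁ _ (y.1 K₁) ∈ N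
          rw [AmalgAux.thread_proj hsurj hcomp y.2 (L.meet_le_left K₁ K₂)]
          rw [← AmalgAux.thread_proj hsurj hcomp y.2 (L.meet_le_right K₁ K₂)]
          exact ⟨y.1 K₂, hyW₂, rfl⟩
      refine ⟨p i K₁ hiK '' W₁, hopen i K₁ hiK W₁ hW₁open, ?_, ?_⟩
      · exact ⟨y.1 K₁, hyW₁, AmalgAux.thread_proj hsurj hcomp y.2 hiK⟩
      · rintro xi' ⟨Z₁, hZ₁W, rfl⟩
        obtain ⟨hZ₁B, hZ₁N⟩ := hZ₁W
        obtain ⟨Z₂, hZ₂W, hZ₂c⟩ := hZ₁N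
        have hanc : AmalgAux.Coh p K₁ Z₁ K₂ Z₂ := by
          intro m h₁ h₂
          have hm : m ≤ c := AmalgAux.le_meet L h₁ h₂
          rw [← hcomp m c K₁ hm (L.meet_le_left K₁ K₂) Z₁, ← hZ₂c,
            hcomp m c K₂ hm (L.meet_le_right K₁ K₂) Z₂]
        obtain ⟨f, hf, hf1, hf2⟩ :=
          AmalgAux.threadExists hsurj hcomp L hcor hcont hanc
        refine ⟨⟨f, hf⟩, ?_, ?_⟩
        · show (⟨f, hf⟩ : {f : ∀ i, X i // ∀ a b, AmalgAux.Coh p a (f a) b (f b)}) ∈ U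
          rw [← hUO]
          refine hsub (Set.mem_pi.mpr ?_)
          intro s hs
          have hsF : s ∈ F := Finset.mem_coe.mp hs
          show f s ∈ u s
          by_cases h1 : s ≤ K₁
          · have e1 : f s = p s K₁ h1 Z₁ := by
              rw [← hf1]
              exact (AmalgAux.thread_proj hsurj hcomp hf h1).symm
            rw [e1]
            have := Set.mem_iInter₂.mp hZ₁B s hs
            rw [dif_pos h1] at this
            exact this
          · have h2 : s ≤ K₂ := (hcov s hsF).resolve_left h1
            have e1 : f s = p s K₂ h2 Z₂ := by
              rw [← hf2]
              exact (AmalgAux.thread_proj hsurj hcomp hf h2).symm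
            rw [e1]
            have := Set.mem_iInter₂.mp hZ₂W s hs
            rw [dif_pos (And.intro h1 h2)] at this
            exact this
        · show f i = p i K₁ hiK Z₁
          rw [← hf1]
          exact (AmalgAux.thread_proj hsurj hcomp hf hiK).symm
    rcases hi with h | h
    · obtain ⟨V, h1, h2, h3⟩ := key k₁ k₂ h hmem
      exact ⟨V, h3, h1, h2⟩
    · obtain ⟨V, h1, h2, h3⟩ := key k₂ k₁ h (fun s hs => (hmem s hs).symm)
      exact ⟨V, h3, h1, h2⟩
  · -- surjectivity
    intro x
    obtain ⟨f, hf, h1, _⟩ := AmalgAux.threadExists hsurj hcomp L hcor hcont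
      (AmalgAux.coh_refl i x)
    exact ⟨⟨f, hf⟩, h1⟩
  · -- commutativity
    intro i j hij y
    exact AmalgAux.thread_proj hsurj hcomp y.2 hij
  · -- correctness
    intro i j xi xj h
    obtain ⟨f, hf, h1, h2⟩ := AmalgAux.threadExists hsurj hcomp L hcor hcont
      (AmalgAux.coh_of_meet hcomp L h)
    exact ⟨⟨f, hf⟩, h1, h2⟩
end
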